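/- arXiv:2008.00538 — 9 statements merged into one kernel-verified Lean document; each statement's English description precedes it below -/
import Mathlib

section
/- Let F(X) = X^d + a_1 X^{d-1} + ... + a_d ∈ Z[X] be monic, α the class of X in R = Z[X]/(F), m a positive integer and μ an integer. Then the Z-submodule I of R spanned by α^{d-1} - μ^{d-1}, ..., α - μ, and m is an ideal of R if and only if F(μ) ≡ 0 (mod m). -/
open Polynomial Finset

lemma key_sum {S : Type*} [CommRing S] (P : Polynomial ℤ) (x : S) (μ : ℤ) (n : ℕ)
    (hn : P.natDegree < n) :
    Polynomial.aeval x P - ((P.eval μ : ℤ) : S)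
      = ∑ j ∈ Finset.range n, P.coeff j • (x ^ j - ((μ : ℤ) : S) ^ j) := by
  conv_lhs => rw [P.as_sum_range' n hn]
  rw [map_sum, Polynomial.eval_finset_sum]
  push_cast
  rw [← Finset.sum_sub_distrib]
  refine Finset.sum_congr rfl fun j hj => ?_
  simp [zsmul_eq_mul, mul_sub]

/-- The ℤ-span of `α^(d-1) - μ^(d-1), …, α - μ, m` in
`R = ℤ[X]/(F)` is an ideal of `R` if and only if `F(μ) ≡ 0 (mod m)`. -/
theorem stmt1 (d : ℕ) (hd : 2 ≤ d) (F : Polynomial ℤ) (hF : F.Monic)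
    (hdeg : F.natDegree = d) (m μ : ℤ) (hm : 0 < m)
    (I : Submodule ℤ (AdjoinRoot F))
    (hI : I = Submodule.span ℤ
      ({((m : ℤ) : AdjoinRoot F)} ∪
        (fun j : ℕ => AdjoinRoot.root F ^ j - (μ : AdjoinRoot F) ^ j) '' Set.Ico 1 d)) :
    (∀ x ∈ I, AdjoinRoot.root F * x ∈ I) ↔ m ∣ F.eval μ := by
  set α := AdjoinRoot.root F with hα
  have hFa : (Polynomial.aeval α) F = 0 := by
    rw [hα, AdjoinRoot.aeval_eq, AdjoinRoot.mk_self]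
  have hsum : ((F.eval μ : ℤ) : AdjoinRoot F)
      = - ∑ j ∈ Finset.range (d + 1), F.coeff j • (α ^ j - ((μ : ℤ) : AdjoinRoot F) ^ j) := by
    have h : Polynomial.aeval α F - ((F.eval μ : ℤ) : AdjoinRoot F)
        = ∑ j ∈ Finset.range (d + 1), F.coeff j • (α ^ j - ((μ : ℤ) : AdjoinRoot F) ^ j) := by
      convert key_sum F α μ (d + 1) (by omega) using 2
      simp only [Polynomial.aeval_def]
      exact congrArg (fun f => Polynomial.eval₂ f α F) (Subsingleton.elim _ _)
    rw [hFa, zero_sub] at h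
    exact neg_eq_iff_eq_neg.mp h
  have hgen : ∀ j, 1 ≤ j → j < d → α ^ j - ((μ : ℤ) : AdjoinRoot F) ^ j ∈ I := by
    intro j h1 h2
    rw [hI]
    exact Submodule.subset_span (Or.inr ⟨j, ⟨h1, h2⟩, rfl⟩)
  have hmI : ((m : ℤ) : AdjoinRoot F) ∈ I := by
    rw [hI]; exact Submodule.subset_span (Or.inl rfl)
  have hcast : ∀ c : ℤ, m ∣ c → ((c : ℤ) : AdjoinRoot F) ∈ I := by
    rintro c ⟨k, rfl⟩
    have h : ((m * k : ℤ) : AdjoinRoot F) = k • ((m : ℤ) : AdjoinRoot F) := by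
      rw [zsmul_eq_mul]; push_cast; ring
    rw [h]
    exact I.smul_mem k hmI
  have hsummem : (∑ j ∈ Finset.range d, F.coeff j • (α ^ j - ((μ : ℤ) : AdjoinRoot F) ^ j)) ∈ I := by
    refine Submodule.sum_mem _ fun j hj => ?_
    rcases Nat.eq_zero_or_pos j with h0 | h1
    · subst h0; simpa using I.zero_mem
    · exact I.smul_mem _ (hgen j h1 (Finset.mem_range.mp hj))
  have hcoeffd : F.coeff d = 1 := by rw [← hdeg]; exact hF.coeff_natDegree
  have hsplit : α ^ d - ((μ : ℤ) : AdjoinRoot F) ^ d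
      = -((F.eval μ : ℤ) : AdjoinRoot F)
        - ∑ j ∈ Finset.range d, F.coeff j • (α ^ j - ((μ : ℤ) : AdjoinRoot F) ^ j) := by
    rw [hsum, Finset.sum_range_succ, hcoeffd, one_smul]
    ring
  constructor
  · -- closed under multiplication by α → m ∣ F(μ)
    intro hcl
    obtain ⟨e, rfl⟩ : ∃ e, d = e + 1 := ⟨d - 1, by omega⟩
    have hx : α ^ e - ((μ : ℤ) : AdjoinRoot F) ^ e ∈ I := hgen e (by omega) (by omega)
    have h1 : α * (α ^ e - ((μ : ℤ) : AdjoinRoot F) ^ e) ∈ I := hcl _ hx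
    have h2 : α ^ (e + 1) - ((μ : ℤ) : AdjoinRoot F) ^ (e + 1) ∈ I := by
      have hident : α ^ (e + 1) - ((μ : ℤ) : AdjoinRoot F) ^ (e + 1)
          = α * (α ^ e - ((μ : ℤ) : AdjoinRoot F) ^ e)
            + (μ ^ e : ℤ) • (α ^ 1 - ((μ : ℤ) : AdjoinRoot F) ^ 1) := by
        rw [zsmul_eq_mul]; push_cast; ring
      rw [hident]
      exact add_mem h1 (I.smul_mem _ (hgen 1 le_rfl (by omega)))
    have h3 : ((F.eval μ : ℤ) : AdjoinRoot F) ∈ I := by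
      rw [hsum, Finset.sum_range_succ, hcoeffd, one_smul, neg_add]
      exact add_mem (neg_mem hsummem) (neg_mem h2)
    -- linear functional to ZMod m.toNat
    set n := m.toNat with hn
    have hnm : (n : ℤ) = m := Int.toNat_of_nonneg hm.le
    set B := AdjoinRoot.powerBasis' hF with hB
    have hdim : B.dim = e + 1 := by rw [hB, AdjoinRoot.powerBasis'_dim, hdeg]
    set L : AdjoinRoot F →ₗ[ℤ] ZMod n :=
      B.basis.constr ℤ (fun i => ((μ ^ (i : ℕ) : ℤ) : ZMod n)) with hL
    have hLpow : ∀ j, j < e + 1 → L (α ^ j) = ((μ ^ j : ℤ) : ZMod n) := by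
      intro j hj
      have hb : B.basis ⟨j, by omega⟩ = α ^ j := by
        rw [B.basis_eq_pow ⟨j, by omega⟩]
        simp [hB, hα]
      rw [← hb, hL, Module.Basis.constr_basis]
    have hL1 : L 1 = 1 := by
      have := hLpow 0 (by omega)
      simpa using this
    have hLc : ∀ c : ℤ, L ((c : ℤ) : AdjoinRoot F) = ((c : ℤ) : ZMod n) := by
      intro c
      have h : ((c : ℤ) : AdjoinRoot F) = c • (1 : AdjoinRoot F) := by
        rw [zsmul_eq_mul, mul_one]
      rw [h, map_smul, hL1]
      simp
    have hker : I ≤ LinearMap.ker L := by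
      rw [hI, Submodule.span_le]
      rintro x (rfl | ⟨j, ⟨hj1, hj2⟩, rfl⟩)
      · simp only [SetLike.mem_coe, LinearMap.mem_ker]
        rw [hLc]
        exact_mod_cast (ZMod.intCast_zmod_eq_zero_iff_dvd m n).mpr (by rw [hnm])
      · simp only [SetLike.mem_coe, LinearMap.mem_ker]
        have hmu : ((μ : ℤ) : AdjoinRoot F) ^ j = (((μ ^ j : ℤ) : ℤ) : AdjoinRoot F) := by
          push_cast; ring
        rw [map_sub, hmu, hLc, hLpow j (by omega)]
        simp
    have h4 : L ((F.eval μ : ℤ) : AdjoinRoot F) = 0 := hker h3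
    rw [hLc] at h4
    have h5 : (n : ℤ) ∣ F.eval μ := (ZMod.intCast_zmod_eq_zero_iff_dvd _ n).mp h4
    rwa [hnm] at h5
  · -- m ∣ F(μ) → closed
    intro hdvd x hx
    have hαd : α ^ d - ((μ : ℤ) : AdjoinRoot F) ^ d ∈ I := by
      rw [hsplit]
      refine sub_mem ?_ hsummem
      have h := hcast (-(F.eval μ)) ((dvd_neg).mpr hdvd)
      push_cast at h
      exact h
    have hmem : ∀ j, 1 ≤ j → j ≤ d → α ^ j - ((μ : ℤ) : AdjoinRoot F) ^ j ∈ I := by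
      intro j h1 h2
      rcases eq_or_lt_of_le h2 with rfl | h
      · exact hαd
      · exact hgen j h1 h
    rw [hI] at hx
    induction hx using Submodule.span_induction with
    | mem y hy =>
      rcases hy with rfl | ⟨j, ⟨hj1, hj2⟩, rfl⟩
      · have hident : α * ((m : ℤ) : AdjoinRoot F)
            = m • (α ^ 1 - ((μ : ℤ) : AdjoinRoot F) ^ 1) + μ • ((m : ℤ) : AdjoinRoot F) := by
          rw [zsmul_eq_mul, zsmul_eq_mul]; push_cast; ring
        rw [hident]
        exact add_mem (I.smul_mem m (hgen 1 le_rfl (by omega))) (I.smul_mem μ hmI)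
      · have hident : α * (α ^ j - ((μ : ℤ) : AdjoinRoot F) ^ j)
            = (α ^ (j + 1) - ((μ : ℤ) : AdjoinRoot F) ^ (j + 1))
              - (μ ^ j : ℤ) • (α ^ 1 - ((μ : ℤ) : AdjoinRoot F) ^ 1) := by
          rw [zsmul_eq_mul]; push_cast; ring
        rw [hident]
        exact sub_mem (hmem (j + 1) (by omega) (by omega))
          (I.smul_mem _ (hgen 1 le_rfl (by omega)))
    | zero => simpa using I.zero_mem
    | add y z _ _ ihy ihz => rw [mul_add]; exact add_mem ihy ihz
    | smul c y _ ih => rw [mul_smul_comm]; exact I.smul_mem c ih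
end

section
/- Let F be a monic degree-d polynomial over Z, α the class of X in R = Z[X]/(F), m > 0 and F(μ) ≡ 0 (mod m), and let I be the ideal of R spanned over Z by α^{d-1} − μ^{d-1}, ..., α − μ, m. Then the quotient R/I is a cyclic group isomorphic to Z/mZ. -/
/-- If `F(μ) ≡ 0 (mod m)` then the quotient of `R = ℤ[X]/(F)`
by the ideal spanned over ℤ by `α^(d-1) - μ^(d-1), …, α - μ, m` is a cyclic
group isomorphic to `ℤ/mℤ`. -/
theorem stmt2 (d : ℕ) (F : Polynomial ℤ) (hF : F.Monic) (hdeg : F.natDegree = d)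
    (m : ℕ) (hm : 0 < m) (μ : ℤ) (hroot : (m : ℤ) ∣ F.eval μ)
    (I : Submodule ℤ (AdjoinRoot F))
    (hI : I = Submodule.span ℤ
      ({((m : ℤ) : AdjoinRoot F)} ∪
        (fun j : ℕ => AdjoinRoot.root F ^ j - (μ : AdjoinRoot F) ^ j) '' Set.Ico 1 d)) :
    Nonempty ((AdjoinRoot F ⧸ I) ≃+ ZMod m) := by
  have hvan : Polynomial.eval₂ (Int.castRingHom (ZMod m)) ((μ : ZMod m)) F = 0 := by
    have := Polynomial.eval₂_at_apply (Int.castRingHom (ZMod m)) μ (p := F)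
    simp only [Int.coe_castRingHom] at this ⊢
    rw [this]
    exact (ZMod.intCast_zmod_eq_zero_iff_dvd _ _).2 hroot
  set φ : AdjoinRoot F →+* ZMod m := AdjoinRoot.lift (Int.castRingHom (ZMod m)) (μ : ZMod m) hvan with hφ
  set f : AdjoinRoot F →ₗ[ℤ] ZMod m := φ.toAddMonoidHom.toIntLinearMap with hf
  have hsurj : Function.Surjective f := by
    intro z
    obtain ⟨k, rfl⟩ := ZMod.intCast_surjective z
    exact ⟨((k : ℤ) : AdjoinRoot F), map_intCast φ k⟩
  have hmI : ((m : ℤ) : AdjoinRoot F) ∈ I := by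
    rw [hI]; exact Submodule.subset_span (Or.inl rfl)
  have hcastI : ∀ n : ℤ, (m : ℤ) ∣ n → ((n : ℤ) : AdjoinRoot F) ∈ I := by
    rintro n ⟨k, rfl⟩
    have : (((m : ℤ) * k : ℤ) : AdjoinRoot F) = k • ((m : ℤ) : AdjoinRoot F) := by
      rw [zsmul_eq_mul]; push_cast; ring
    rw [this]
    exact Submodule.smul_mem _ _ hmI
  have hker : LinearMap.ker f = I := by
    apply le_antisymm
    · -- ker ≤ I
      intro x hx
      obtain ⟨p, rfl⟩ := AdjoinRoot.mk_surjective x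
      rcases Nat.eq_zero_or_pos d with hd0 | hd
      · -- F = 1, ring is trivial
        have hF1 : F = 1 := Polynomial.eq_one_of_monic_natDegree_zero hF (hdeg.trans hd0)
        have h1 : (1 : AdjoinRoot F) = 0 := by
          rw [← map_one (AdjoinRoot.mk F), ← hF1, AdjoinRoot.mk_self]
        have : AdjoinRoot.mk F p = 0 := by
          calc AdjoinRoot.mk F p = AdjoinRoot.mk F p * 1 := by ring
          _ = 0 := by rw [h1, mul_zero]
        rw [this]; exact Submodule.zero_mem I
      · have hFne1 : F ≠ 1 := by
          intro h; rw [h] at hdeg; simp at hdeg; omega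
        set r := p %ₘ F with hr
        have hmk : AdjoinRoot.mk F p = AdjoinRoot.mk F r := by
          rw [AdjoinRoot.mk_eq_mk]
          exact ⟨p /ₘ F, by rw [hr, Polynomial.modByMonic_eq_sub_mul_div p F]; ring⟩
        have hrd : r.natDegree < d := hdeg ▸ Polynomial.natDegree_modByMonic_lt p hF hFne1
        -- expansion of mk r minus eval
        have hexp : AdjoinRoot.mk F r - ((r.eval μ : ℤ) : AdjoinRoot F)
            = ∑ i ∈ Finset.range d, (r.coeff i) •
                (AdjoinRoot.root F ^ i - (μ : AdjoinRoot F) ^ i) := by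
          conv_lhs => rw [Polynomial.as_sum_range' r d hrd]
          rw [map_sum, Polynomial.eval_finset_sum]
          push_cast
          rw [← Finset.sum_sub_distrib]
          refine Finset.sum_congr rfl fun i _ => ?_
          rw [Polynomial.eval_monomial, zsmul_eq_mul,
            ← Polynomial.C_mul_X_pow_eq_monomial, map_mul, AdjoinRoot.mk_C, map_pow,
            AdjoinRoot.mk_X]
          have hC : (AdjoinRoot.of F) (r.coeff i) = ((r.coeff i : ℤ) : AdjoinRoot F) := by
            simpa using map_intCast (AdjoinRoot.of F) (r.coeff i)
          rw [hC]
          push_cast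
          ring
        have hsum : AdjoinRoot.mk F r - ((r.eval μ : ℤ) : AdjoinRoot F) ∈ I := by
          rw [hexp]
          refine Submodule.sum_mem I fun i hi => ?_
          rcases Nat.eq_zero_or_pos i with h0 | h1
          · subst h0; simp
          · refine Submodule.smul_mem I _ (hI ▸ Submodule.subset_span ?_)
            exact Or.inr ⟨i, ⟨h1, Finset.mem_range.mp hi⟩, rfl⟩
        have hval : f (AdjoinRoot.mk F p) = ((r.eval μ : ℤ) : ZMod m) := by
          rw [hmk]
          show φ (AdjoinRoot.mk F r) = _
          rw [hφ, AdjoinRoot.lift_mk]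
          have := Polynomial.eval₂_at_apply (Int.castRingHom (ZMod m)) μ (p := r)
          simp at this ⊢
        have hdvd : (m : ℤ) ∣ r.eval μ := by
          rw [LinearMap.mem_ker, hval] at hx
          exact (ZMod.intCast_zmod_eq_zero_iff_dvd _ _).1 hx
        have : AdjoinRoot.mk F p
            = (AdjoinRoot.mk F r - ((r.eval μ : ℤ) : AdjoinRoot F))
              + ((r.eval μ : ℤ) : AdjoinRoot F) := by rw [hmk]; ring
        rw [this]
        exact Submodule.add_mem I hsum (hcastI _ hdvd)
    · -- I ≤ ker
      rw [hI, Submodule.span_le]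
      rintro x (rfl | ⟨j, hj, rfl⟩)
      · simp only [SetLike.mem_coe, LinearMap.mem_ker, hf]
        show φ _ = 0
        rw [map_intCast]
        simp
      · simp only [SetLike.mem_coe, LinearMap.mem_ker, hf]
        show φ _ = 0
        rw [map_sub, map_pow, map_pow, map_intCast, hφ, AdjoinRoot.lift_root]
        ring
  exact ⟨((Submodule.quotEquivOfEq I (LinearMap.ker f) hker.symm).trans
    (f.quotKerEquivOfSurjective hsurj)).toAddEquiv⟩
end

section
/- Let F be a monic polynomial of degree d over Z, α the class of X in R = Z[X]/(F), and let I be an ideal of R of finite index such that R/I is a cyclic group. Then there exist a unique positive integer m and a unique residue class μ mod m with F(μ) ≡ 0 (mod m) such that I equals the Z-span of α^{d-1} − μ^{d-1}, ..., α − μ, and m. -/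
/-- The ℤ-submodule of `ℤ[X]/(F)` spanned by `α^j - μ^j` for `1 ≤ j < d`
together with `m`, associated to a root `μ mod m` of `F`. -/
noncomputable def rootSpan (F : Polynomial ℤ) (d : ℕ) (m μ : ℤ) : Submodule ℤ (AdjoinRoot F) :=
  Submodule.span ℤ
    ({(m : AdjoinRoot F)} ∪
      (fun j : ℕ => AdjoinRoot.root F ^ j - (μ : AdjoinRoot F) ^ j) '' Set.Ico 1 d)

/-- In a finite commutative ring whose additive group is cyclic, the integer
cast map is surjective. -/
lemma intCast_surj_of_isAddCyclic (Q : Type*) [CommRing Q] [Finite Q]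
    (hcyc : IsAddCyclic Q) : Function.Surjective (Int.cast : ℤ → Q) := by
  obtain ⟨g, hg⟩ := hcyc.exists_generator
  have hord : ∀ x : Q, addOrderOf x ∣ addOrderOf (1 : Q) := by
    intro x
    rw [addOrderOf_dvd_iff_nsmul_eq_zero]
    have : (addOrderOf (1 : Q)) • x = x * ((addOrderOf (1 : Q)) • (1 : Q)) := by
      simp [nsmul_eq_mul, mul_comm]
    rw [this, addOrderOf_nsmul_eq_zero, mul_zero]
  have hgtop : AddSubgroup.zmultiples g = ⊤ := by
    rw [AddSubgroup.eq_top_iff']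
    exact hg
  have hcardg : addOrderOf g = Nat.card Q := by
    rw [← Nat.card_zmultiples, hgtop]
    exact Nat.card_congr (Equiv.subtypeUnivEquiv (by simp))
  have hone : addOrderOf (1 : Q) = Nat.card Q := by
    refine Nat.dvd_antisymm (addOrderOf_dvd_natCard _) ?_
    rw [← hcardg]
    exact hord g
  have htop : AddSubgroup.zmultiples (1 : Q) = ⊤ := by
    apply AddSubgroup.eq_top_of_card_eq
    rw [Nat.card_zmultiples, hone]
  intro x
  have hx : x ∈ AddSubgroup.zmultiples (1 : Q) := by rw [htop]; trivial
  obtain ⟨k, hk⟩ := AddSubgroup.mem_zmultiples_iff.mp hx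
  exact ⟨k, by rw [← hk, zsmul_eq_mul, mul_one]⟩

open Polynomial AdjoinRoot in
/-- The kernel of the lift `ℤ[X]/(F) → ZMod n` sending the root to `μ` is
exactly `rootSpan F d n μ`. -/
lemma lift_ker_eq_rootSpan (d : ℕ) (hd : 2 ≤ d) (F : Polynomial ℤ) (hF : F.Monic)
    (hdeg : F.natDegree = d) (n : ℕ) (μ : ℤ)
    (h : Polynomial.eval₂ (Int.castRingHom (ZMod n)) ((μ : ℤ) : ZMod n) F = 0) :
    (RingHom.ker
        (AdjoinRoot.lift (Int.castRingHom (ZMod n)) ((μ : ℤ) : ZMod n) h)).restrictScalars ℤ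
      = rootSpan F d (n : ℤ) μ := by
  set φ := AdjoinRoot.lift (Int.castRingHom (ZMod n)) ((μ : ℤ) : ZMod n) h with hφdef
  have hφroot : φ (root F) = ((μ : ℤ) : ZMod n) := AdjoinRoot.lift_root h
  apply le_antisymm
  · intro z hz
    have hz' : φ z = 0 := hz
    obtain ⟨q0, rfl⟩ := AdjoinRoot.mk_surjective z
    set p := q0 %ₘ F with hp
    have hF1 : F ≠ 1 := by
      intro h1
      rw [h1, Polynomial.natDegree_one] at hdeg
      omega
    have hlt : p.natDegree < d := hdeg ▸ Polynomial.natDegree_modByMonic_lt q0 hF hF1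
    have hmk : AdjoinRoot.mk F q0 = AdjoinRoot.mk F p := by
      rw [AdjoinRoot.mk_eq_mk]
      exact ⟨q0 /ₘ F, by rw [hp]; linear_combination -(Polynomial.modByMonic_add_div q0 F)⟩
    rw [hmk] at hz' ⊢
    have hφp : ((p.eval μ : ℤ) : ZMod n) = 0 := by
      rw [hφdef, AdjoinRoot.lift_mk, Polynomial.eval₂_at_intCast] at hz'
      simpa using hz'
    obtain ⟨k, hk⟩ := (ZMod.intCast_zmod_eq_zero_iff_dvd _ n).mp hφp
    have hrep : AdjoinRoot.mk F p = ∑ i ∈ Finset.range d, p.coeff i • root F ^ i := by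
      rw [← AdjoinRoot.aeval_eq, Polynomial.aeval_eq_sum_range' hlt]
    have hcast : ((p.eval μ : ℤ) : AdjoinRoot F)
        = ∑ i ∈ Finset.range d, p.coeff i • ((μ : ℤ) : AdjoinRoot F) ^ i := by
      rw [Polynomial.eval_eq_sum_range' hlt]
      push_cast
      simp [zsmul_eq_mul]
    have key : AdjoinRoot.mk F p
        = (∑ i ∈ Finset.Ico 1 d, p.coeff i • (root F ^ i - ((μ : ℤ) : AdjoinRoot F) ^ i))
          + k • ((n : ℤ) : AdjoinRoot F) := by
      have h0 : ∑ i ∈ Finset.range d, p.coeff i • (root F ^ i - ((μ : ℤ) : AdjoinRoot F) ^ i)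
          = ∑ i ∈ Finset.Ico 1 d, p.coeff i • (root F ^ i - ((μ : ℤ) : AdjoinRoot F) ^ i) := by
        rw [Finset.range_eq_Ico, Finset.sum_eq_sum_Ico_succ_bot (show (0:ℕ) < d by omega)]
        rw [pow_zero, pow_zero, sub_self, smul_zero, zero_add]
      have hnk : k • ((n : ℤ) : AdjoinRoot F) = ((p.eval μ : ℤ) : AdjoinRoot F) := by
        rw [hk]
        push_cast
        rw [zsmul_eq_mul]
        ring
      rw [hrep, ← h0, hnk, hcast, ← Finset.sum_add_distrib]
      refine Finset.sum_congr rfl fun i _ => ?_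
      rw [← smul_add, sub_add_cancel]
    rw [key]
    refine Submodule.add_mem _ ?_ ?_
    · refine Submodule.sum_mem _ fun i hi => Submodule.smul_mem _ _ ?_
      refine Submodule.subset_span (Or.inr ⟨i, ?_, rfl⟩)
      simpa using hi
    · exact Submodule.smul_mem _ _ (Submodule.subset_span (Or.inl rfl))
  · rw [rootSpan, Submodule.span_le]
    rintro x (rfl | ⟨j, hj, rfl⟩)
    · show φ ((n : ℤ) : AdjoinRoot F) = 0
      rw [map_intCast]
      simp
    · show φ (root F ^ j - ((μ : ℤ) : AdjoinRoot F) ^ j) = 0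
      simp [hφroot]

open Polynomial AdjoinRoot in
/-- Every finite-index ideal `I` of `R = ℤ[X]/(F)` with `R/I`
cyclic arises from a unique positive integer `m` and a unique residue class
`μ mod m` with `F(μ) ≡ 0 (mod m)`, by taking the ℤ-span of
`α^(d-1) - μ^(d-1), …, α - μ, m`. -/
theorem stmt3 (d : ℕ) (hd : 2 ≤ d) (F : Polynomial ℤ) (hF : F.Monic)
    (hdeg : F.natDegree = d)
    (I : Ideal (AdjoinRoot F)) (hfin : Finite (AdjoinRoot F ⧸ I))
    (hcyc : IsAddCyclic (AdjoinRoot F ⧸ I)) :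
    ∃ (m : ℤ) (μ : ℤ), 0 < m ∧ m ∣ F.eval μ ∧
      I.restrictScalars ℤ = rootSpan F d m μ ∧
      ∀ (m' μ' : ℤ), 0 < m' → m' ∣ F.eval μ' →
        I.restrictScalars ℤ = rootSpan F d m' μ' →
        m' = m ∧ μ' ≡ μ [ZMOD m] := by
  classical
  set Q := AdjoinRoot F ⧸ I with hQ
  set q : AdjoinRoot F →+* Q := Ideal.Quotient.mk I with hq
  have hsurjZ : Function.Surjective (Int.cast : ℤ → Q) :=
    intCast_surj_of_isAddCyclic Q hcyc
  set n : ℕ := ringChar Q with hn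
  haveI : CharP Q n := ringChar.charP Q
  have hn0 : n ≠ 0 := CharP.char_ne_zero_of_finite Q n
  haveI : NeZero n := ⟨hn0⟩
  obtain ⟨μ, hμ⟩ := hsurjZ (q (root F))
  have halg : Int.castRingHom (AdjoinRoot F) = algebraMap ℤ (AdjoinRoot F) :=
    Subsingleton.elim _ _
  have hmkeq : ∀ p : Polynomial ℤ,
      Polynomial.eval₂ (Int.castRingHom (AdjoinRoot F)) (root F) p = AdjoinRoot.mk F p := by
    intro p
    rw [halg, ← Polynomial.aeval_def, AdjoinRoot.aeval_eq]
  have h2 : (Int.castRingHom Q) = q.comp (Int.castRingHom (AdjoinRoot F)) :=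
    Subsingleton.elim _ _
  -- F(μ) ≡ 0 mod n
  have hFμQ : ((F.eval μ : ℤ) : Q) = 0 := by
    have h1 : ((F.eval μ : ℤ) : Q) = F.eval₂ (Int.castRingHom Q) ((μ : ℤ) : Q) := by
      rw [Polynomial.eval₂_at_intCast]
      simp
    rw [h1, hμ, h2, ← Polynomial.hom_eval₂, hmkeq F, AdjoinRoot.mk_self, map_zero]
  have hdvd : (n : ℤ) ∣ F.eval μ := (CharP.intCast_eq_zero_iff Q n _).mp hFμQ
  have heval : Polynomial.eval₂ (Int.castRingHom (ZMod n)) ((μ : ℤ) : ZMod n) F = 0 := by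
    rw [Polynomial.eval₂_at_intCast]
    simpa using (ZMod.intCast_zmod_eq_zero_iff_dvd _ n).mpr hdvd
  set φ := AdjoinRoot.lift (Int.castRingHom (ZMod n)) ((μ : ℤ) : ZMod n) heval with hφdef
  set ψ : ZMod n →+* Q := ZMod.castHom (dvd_refl n) Q with hψdef
  have hψinj : Function.Injective ψ := ZMod.castHom_injective Q
  have hψsurj : Function.Surjective ψ := by
    intro x
    obtain ⟨k, hk⟩ := hsurjZ x
    exact ⟨(k : ZMod n), by rw [map_intCast, hk]⟩
  -- ψ ∘ φ = q
  have hcomp : ∀ x, ψ (φ x) = q x := by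
    intro x
    obtain ⟨p, rfl⟩ := AdjoinRoot.mk_surjective x
    rw [hφdef, AdjoinRoot.lift_mk, Polynomial.hom_eval₂, map_intCast]
    have h2' : ψ.comp (Int.castRingHom (ZMod n)) = q.comp (Int.castRingHom (AdjoinRoot F)) :=
      Subsingleton.elim _ _
    rw [h2', hμ, ← Polynomial.hom_eval₂, hmkeq p]
  have hker : RingHom.ker φ = I := by
    ext x
    rw [RingHom.mem_ker]
    constructor
    · intro hx
      have : ψ (φ x) = 0 := by rw [hx, map_zero]
      rw [hcomp] at this
      exact Ideal.Quotient.eq_zero_iff_mem.mp this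
    · intro hx
      apply hψinj
      rw [hcomp, map_zero]
      exact Ideal.Quotient.eq_zero_iff_mem.mpr hx
  have hspan : I.restrictScalars ℤ = rootSpan F d (n : ℤ) μ := by
    rw [← hker]
    exact lift_ker_eq_rootSpan d hd F hF hdeg n μ heval
  -- cardinality of Q is n
  have hcardQ : Nat.card Q = n := by
    rw [← Nat.card_zmod n]
    exact (Nat.card_eq_of_bijective ψ ⟨hψinj, hψsurj⟩).symm
  refine ⟨(n : ℤ), μ, by positivity, hdvd, hspan, ?_⟩
  intro m' μ' hm' hdvd' hspan'
  set n' : ℕ := m'.toNat with hn'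
  have hn'm : (n' : ℤ) = m' := Int.toNat_of_nonneg hm'.le
  have hdvd'' : (n' : ℤ) ∣ F.eval μ' := hn'm ▸ hdvd'
  have heval' : Polynomial.eval₂ (Int.castRingHom (ZMod n')) ((μ' : ℤ) : ZMod n') F = 0 := by
    rw [Polynomial.eval₂_at_intCast]
    simpa using (ZMod.intCast_zmod_eq_zero_iff_dvd _ n').mpr hdvd''
  haveI : NeZero n' := ⟨by omega⟩
  set φ' := AdjoinRoot.lift (Int.castRingHom (ZMod n')) ((μ' : ℤ) : ZMod n') heval' with hφ'def
  have hker' : RingHom.ker φ' = I := by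
    apply Submodule.restrictScalars_injective ℤ
    rw [lift_ker_eq_rootSpan d hd F hF hdeg n' μ' heval', hspan', hn'm]
  -- μ' ≡ μ : both root - μ and root - μ' lie in I
  have hroot_mem : ∀ (mm νν : ℤ), I.restrictScalars ℤ = rootSpan F d mm νν →
      root F - ((νν : ℤ) : AdjoinRoot F) ∈ I := by
    intro mm νν hsp
    have : root F ^ 1 - ((νν : ℤ) : AdjoinRoot F) ^ 1 ∈ rootSpan F d mm νν := by
      refine Submodule.subset_span (Or.inr ⟨1, ?_, rfl⟩)
      simp; omega
    rw [← hsp] at this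
    simpa using this
  have h1 : root F - ((μ : ℤ) : AdjoinRoot F) ∈ I := hroot_mem _ _ hspan
  have h2 : root F - ((μ' : ℤ) : AdjoinRoot F) ∈ I := hroot_mem _ _ hspan'
  have hsub : ((μ' - μ : ℤ) : AdjoinRoot F) ∈ I := by
    have : (root F - ((μ : ℤ) : AdjoinRoot F)) - (root F - ((μ' : ℤ) : AdjoinRoot F)) ∈ I :=
      Ideal.sub_mem I h1 h2
    convert this using 1
    push_cast
    ring
  have hμμ' : (n : ℤ) ∣ μ' - μ := by
    have : ((μ' - μ : ℤ) : Q) = 0 := by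
      have := Ideal.Quotient.eq_zero_iff_mem.mpr hsub
      rwa [show ((Ideal.Quotient.mk I) ((μ' - μ : ℤ) : AdjoinRoot F)) = ((μ' - μ : ℤ) : Q) from
        map_intCast q _] at this
    exact (CharP.intCast_eq_zero_iff Q n _).mp this
  constructor
  · -- m' = n via cardinality
    have hφ'surj : Function.Surjective φ' := by
      intro y
      obtain ⟨k, hk⟩ := ZMod.intCast_surjective y
      exact ⟨((k : ℤ) : AdjoinRoot F), by rw [map_intCast, hk]⟩
    have hcard' : Nat.card Q = n' := by
      have e : (AdjoinRoot F ⧸ RingHom.ker φ') ≃+* ZMod n' :=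
        RingHom.quotientKerEquivOfSurjective hφ'surj
      have e2 : Q ≃+* ZMod n' := (Ideal.quotEquivOfEq hker'.symm).trans e
      rw [Nat.card_congr e2.toEquiv, Nat.card_zmod]
    have : (n' : ℤ) = (n : ℤ) := by
      rw [← hcard', hcardQ]
    rw [← hn'm, this]
  · exact ((Int.modEq_iff_dvd).mpr hμμ').symm
end

section
/- Let F(X) = X^3 + a_1 X^2 + a_2 X + a_3 ∈ Z[X], α the class of X in R = Z[X]/(F). Let m_1, m_2 be positive integers and μ_1, μ_2, λ integers, and let I be the Z-span in R of β_1 = α^2 + (μ_1 + a_1)α + λ, β_2 = m_1 α − μ_2 m_1, β_3 = m_1 m_2. If I is an ideal of R, then F(μ_1) ≡ 0 (mod m_1) and F(μ_2) ≡ 0 (mod m_2). -/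
open Polynomial

/-- The ℤ-span in `ℤ[X]/(F)` (F cubic) of
`β₁ = α² + (μ₁+a₁)α + λ`, `β₂ = m₁α - μ₂m₁`, `β₃ = m₁m₂`. -/
noncomputable def cubicSpan (F : Polynomial ℤ) (a1 m1 m2 μ1 μ2 lam : ℤ) :
    Submodule ℤ (AdjoinRoot F) :=
  Submodule.span ℤ
    {AdjoinRoot.root F ^ 2 + ((μ1 + a1 : ℤ) : AdjoinRoot F) * AdjoinRoot.root F
        + ((lam : ℤ) : AdjoinRoot F),
      ((m1 : ℤ) : AdjoinRoot F) * AdjoinRoot.root F - ((μ2 * m1 : ℤ) : AdjoinRoot F),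
      ((m1 * m2 : ℤ) : AdjoinRoot F)}

/-- if the lattice `cubicSpan` is an ideal of `ℤ[X]/(F)` for the
monic cubic `F = X³ + a₁X² + a₂X + a₃`, then `F(μ₁) ≡ 0 (mod m₁)` and
`F(μ₂) ≡ 0 (mod m₂)`. -/
theorem stmt4 (a1 a2 a3 m1 m2 μ1 μ2 lam : ℤ) (hm1 : 0 < m1) (hm2 : 0 < m2)
    (F : Polynomial ℤ)
    (hF : F = X ^ 3 + C a1 * X ^ 2 + C a2 * X + C a3)
    (hIdeal : ∀ x ∈ cubicSpan F a1 m1 m2 μ1 μ2 lam,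
      AdjoinRoot.root F * x ∈ cubicSpan F a1 m1 m2 μ1 μ2 lam) :
    m1 ∣ F.eval μ1 ∧ m2 ∣ F.eval μ2 := by
  have hmon : F.Monic := by rw [hF]; monicity!
  have hdeg : F.natDegree = 3 := by rw [hF]; compute_degree!
  set α := AdjoinRoot.root F with hα
  set pb := AdjoinRoot.powerBasis' hmon with hpb
  have hdim : pb.dim = 3 := by simp [hpb, hdeg]
  set i0 : Fin pb.dim := ⟨0, by omega⟩ with hi0
  set i1 : Fin pb.dim := ⟨1, by omega⟩ with hi1
  set i2 : Fin pb.dim := ⟨2, by omega⟩ with hi2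
  have hb0 : pb.basis i0 = 1 := by rw [pb.basis_eq_pow]; simp [hpb, hi0]
  have hb1 : pb.basis i1 = α := by rw [pb.basis_eq_pow]; simp [hpb, hi1, hα]
  have hb2 : pb.basis i2 = α ^ 2 := by rw [pb.basis_eq_pow]; simp [hpb, hi2, hα]
  have key : ∀ c0 c1 c2 : ℤ,
      pb.basis.repr ((c0 : AdjoinRoot F) + (c1 : AdjoinRoot F) * α + (c2 : AdjoinRoot F) * α ^ 2) i0 = c0 ∧
      pb.basis.repr ((c0 : AdjoinRoot F) + (c1 : AdjoinRoot F) * α + (c2 : AdjoinRoot F) * α ^ 2) i1 = c1 ∧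
      pb.basis.repr ((c0 : AdjoinRoot F) + (c1 : AdjoinRoot F) * α + (c2 : AdjoinRoot F) * α ^ 2) i2 = c2 := by
    intro c0 c1 c2
    have hx : (c0 : AdjoinRoot F) + (c1 : AdjoinRoot F) * α + (c2 : AdjoinRoot F) * α ^ 2
        = c0 • pb.basis i0 + c1 • pb.basis i1 + c2 • pb.basis i2 := by
      rw [hb0, hb1, hb2]; simp [zsmul_eq_mul]
    rw [hx]
    simp only [map_add, map_smul, Module.Basis.repr_self, Finsupp.coe_add, Finsupp.coe_smul,
      Pi.add_apply, Pi.smul_apply, Finsupp.single_apply, smul_eq_mul]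
    refine ⟨?_, ?_, ?_⟩ <;> simp [hi0, hi1, hi2, Fin.ext_iff]
  have hrel : α ^ 3 = -(a1 : AdjoinRoot F) * α ^ 2 - (a2 : AdjoinRoot F) * α - (a3 : AdjoinRoot F) := by
    have h0 : (aeval α) (X ^ 3 + C a1 * X ^ 2 + C a2 * X + C a3) = 0 := by
      rw [← hF, AdjoinRoot.aeval_eq]; exact AdjoinRoot.mk_self
    simp only [map_add, map_mul, map_pow, aeval_X, aeval_C,
      algebraMap_int_eq, eq_intCast, map_intCast] at h0
    linear_combination h0
  -- divisibility conditions satisfied by every element of the span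
  have mem_div : ∀ x ∈ cubicSpan F a1 m1 m2 μ1 μ2 lam,
      m1 ∣ (pb.basis.repr x i1 - (μ1 + a1) * pb.basis.repr x i2) ∧
      m1 * m2 ∣ (pb.basis.repr x i0 - lam * pb.basis.repr x i2
        + μ2 * (pb.basis.repr x i1 - (μ1 + a1) * pb.basis.repr x i2)) := by
    intro x hx
    induction hx using Submodule.span_induction with
    | mem y hy =>
      rcases hy with rfl | rfl | rfl
      · have h1 : α ^ 2 + ((μ1 + a1 : ℤ) : AdjoinRoot F) * α + ((lam : ℤ) : AdjoinRoot F)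
            = ((lam : ℤ) : AdjoinRoot F) + ((μ1 + a1 : ℤ) : AdjoinRoot F) * α
              + ((1 : ℤ) : AdjoinRoot F) * α ^ 2 := by push_cast; ring
        rw [h1]
        obtain ⟨k0, k1, k2⟩ := key lam (μ1 + a1) 1
        rw [k0, k1, k2]
        constructor <;> · refine ⟨0, by ring⟩
      · have h1 : ((m1 : ℤ) : AdjoinRoot F) * α - ((μ2 * m1 : ℤ) : AdjoinRoot F)
            = ((-(μ2 * m1) : ℤ) : AdjoinRoot F) + ((m1 : ℤ) : AdjoinRoot F) * α
              + ((0 : ℤ) : AdjoinRoot F) * α ^ 2 := by push_cast; ring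
        rw [h1]
        obtain ⟨k0, k1, k2⟩ := key (-(μ2 * m1)) m1 0
        rw [k0, k1, k2]
        exact ⟨⟨1, by ring⟩, ⟨0, by ring⟩⟩
      · have h1 : ((m1 * m2 : ℤ) : AdjoinRoot F)
            = ((m1 * m2 : ℤ) : AdjoinRoot F) + ((0 : ℤ) : AdjoinRoot F) * α
              + ((0 : ℤ) : AdjoinRoot F) * α ^ 2 := by push_cast; ring
        rw [h1]
        obtain ⟨k0, k1, k2⟩ := key (m1 * m2) 0 0
        rw [k0, k1, k2]
        exact ⟨⟨0, by ring⟩, ⟨1, by ring⟩⟩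
    | zero => simp
    | add u v hu hv ihu ihv =>
      simp only [map_add, Finsupp.coe_add, Pi.add_apply]
      exact ⟨(dvd_add ihu.1 ihv.1).trans (dvd_of_eq (by ring)),
        (dvd_add ihu.2 ihv.2).trans (dvd_of_eq (by ring))⟩
    | smul c u hu ihu =>
      simp only [map_smul, Finsupp.coe_smul, Pi.smul_apply, smul_eq_mul]
      exact ⟨((ihu.1).mul_left c).trans (dvd_of_eq (by ring)),
        ((ihu.2).mul_left c).trans (dvd_of_eq (by ring))⟩
  -- apply the ideal hypothesis to β₁ and β₂
  have hg1 : α ^ 2 + ((μ1 + a1 : ℤ) : AdjoinRoot F) * α + ((lam : ℤ) : AdjoinRoot F)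
      ∈ cubicSpan F a1 m1 m2 μ1 μ2 lam :=
    Submodule.subset_span (by left; rfl)
  have hg2 : ((m1 : ℤ) : AdjoinRoot F) * α - ((μ2 * m1 : ℤ) : AdjoinRoot F)
      ∈ cubicSpan F a1 m1 m2 μ1 μ2 lam :=
    Submodule.subset_span (by right; left; rfl)
  have hp1 := mem_div _ (hIdeal _ hg1)
  have hp2 := mem_div _ (hIdeal _ hg2)
  have e1 : α * (α ^ 2 + ((μ1 + a1 : ℤ) : AdjoinRoot F) * α + ((lam : ℤ) : AdjoinRoot F))
      = ((-a3 : ℤ) : AdjoinRoot F) + ((lam - a2 : ℤ) : AdjoinRoot F) * α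
        + ((μ1 : ℤ) : AdjoinRoot F) * α ^ 2 := by
    push_cast; linear_combination hrel
  have e2 : α * (((m1 : ℤ) : AdjoinRoot F) * α - ((μ2 * m1 : ℤ) : AdjoinRoot F))
      = ((0 : ℤ) : AdjoinRoot F) + ((-(μ2 * m1) : ℤ) : AdjoinRoot F) * α
        + ((m1 : ℤ) : AdjoinRoot F) * α ^ 2 := by
    push_cast; ring
  rw [e1] at hp1
  rw [e2] at hp2
  obtain ⟨q10, q11, q12⟩ := key (-a3) (lam - a2) μ1
  obtain ⟨q20, q21, q22⟩ := key 0 (-(μ2 * m1)) m1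
  rw [q10, q11, q12] at hp1
  rw [q20, q21, q22] at hp2
  obtain ⟨hB, hC⟩ := hp1
  obtain ⟨-, hA⟩ := hp2
  -- extract integer witnesses
  obtain ⟨kb, hkb⟩ := hB
  obtain ⟨kc, hkc⟩ := hC
  obtain ⟨ka, hka⟩ := hA
  have heval1 : F.eval μ1 = μ1 ^ 3 + a1 * μ1 ^ 2 + a2 * μ1 + a3 := by rw [hF]; simp
  have heval2 : F.eval μ2 = μ2 ^ 3 + a1 * μ2 ^ 2 + a2 * μ2 + a3 := by rw [hF]; simp
  constructor
  · exact ⟨-(m2 * kc) + (μ2 - μ1) * kb, by rw [heval1]; linear_combination (μ2 - μ1) * hkb - hkc⟩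
  · -- cancel m1 in hA to get m2 ∣ A, and m2 ∣ C
    have hA' : -lam - μ2 ^ 2 - μ2 * μ1 - μ2 * a1 = m2 * ka := by
      have h := mul_left_cancel₀ (show m1 ≠ 0 by omega)
        (show m1 * (-lam - μ2 ^ 2 - μ2 * μ1 - μ2 * a1) = m1 * (m2 * ka) by
          linear_combination hka)
      exact h
    exact ⟨-(m1 * kc) - (μ2 - μ1) * ka, by rw [heval2]; linear_combination -hkc - (μ2 - μ1) * hA'⟩
end

section
/- Let F(X) = X^3 + a_1X^2 + a_2X + a_3 ∈ Z[X], α the class of X in R = Z[X]/(F). Suppose m_1, m_2 are positive integers and integers μ_1, μ_2 satisfy F(μ_1) ≡ 0 (mod m_1), F(μ_2) ≡ 0 (mod m_2), and gcd(m_1, m_2, μ_1 − μ_2) = 1. Then there exists an integer λ such that the Z-span of α^2 + (μ_1 + a_1)α + λ, m_1α − μ_2 m_1, and m_1 m_2 is an ideal of R, and λ is unique modulo m_1 m_2. -/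
open Polynomial

private lemma mkC' (F : Polynomial ℤ) (x : ℤ) :
    AdjoinRoot.mk F (C x) = (x : AdjoinRoot F) := by
  have h : (C x : ℤ[X]) = ((x : ℤ[X])) := by simp [Polynomial.C_eq_intCast]
  rw [h, map_intCast]

private lemma indep3 (F : Polynomial ℤ) (a1 a2 a3 : ℤ)
    (hF : F = X ^ 3 + C a1 * X ^ 2 + C a2 * X + C a3)
    (A B C' : ℤ)
    (h : ((A : AdjoinRoot F)) * AdjoinRoot.root F ^ 2 + (B : AdjoinRoot F) * AdjoinRoot.root F
      + (C' : AdjoinRoot F) = 0) :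
    A = 0 ∧ B = 0 ∧ C' = 0 := by
  have hdeg : F.degree = 3 := by rw [hF]; compute_degree!
  have heq : (AdjoinRoot.mk F) (C A * X ^ 2 + C B * X + C C') = 0 := by
    simp only [map_add, map_mul, map_pow, AdjoinRoot.mk_X, mkC']
    exact h
  rw [AdjoinRoot.mk_eq_zero] at heq
  have h0 : C A * X ^ 2 + C B * X + C C' = 0 :=
    eq_zero_of_dvd_of_degree_lt heq (by
      rw [hdeg]
      refine lt_of_le_of_lt (b := (2 : WithBot ℕ)) ?_ (by norm_num)
      compute_degree)
  refine ⟨?_, ?_, ?_⟩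
  · have := congrArg (fun p => coeff p 2) h0
    simp only [coeff_add, coeff_C_mul, coeff_X_pow, coeff_C, coeff_X, coeff_zero] at this
    simpa using this
  · have := congrArg (fun p => coeff p 1) h0
    simp only [coeff_add, coeff_C_mul, coeff_X_pow, coeff_C, coeff_X, coeff_zero] at this
    simpa using this
  · have := congrArg (fun p => coeff p 0) h0
    simp only [coeff_add, coeff_C_mul, coeff_X_pow, coeff_C, coeff_X, coeff_zero] at this
    simpa using this

private lemma root_cube (F : Polynomial ℤ) (a1 a2 a3 : ℤ)
    (hF : F = X ^ 3 + C a1 * X ^ 2 + C a2 * X + C a3) :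
    (AdjoinRoot.root F) ^ 3 = -(a1 : AdjoinRoot F) * AdjoinRoot.root F ^ 2
      - (a2 : AdjoinRoot F) * AdjoinRoot.root F - (a3 : AdjoinRoot F) := by
  have h : AdjoinRoot.mk F (X ^ 3 + C a1 * X ^ 2 + C a2 * X + C a3) = 0 := by
    rw [← hF]; exact AdjoinRoot.mk_self
  simp only [map_add, map_mul, map_pow, AdjoinRoot.mk_X, mkC'] at h
  linear_combination h

private lemma mem_cubicSpan (F : Polynomial ℤ) (a1 m1 m2 μ1 μ2 lam : ℤ) (x : AdjoinRoot F) :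
    x ∈ cubicSpan F a1 m1 m2 μ1 μ2 lam ↔ ∃ c1 c2 c3 : ℤ,
      x = (c1 : AdjoinRoot F) * (AdjoinRoot.root F ^ 2
            + ((μ1 + a1 : ℤ) : AdjoinRoot F) * AdjoinRoot.root F + ((lam : ℤ) : AdjoinRoot F))
        + (c2 : AdjoinRoot F) * (((m1 : ℤ) : AdjoinRoot F) * AdjoinRoot.root F
            - ((μ2 * m1 : ℤ) : AdjoinRoot F))
        + (c3 : AdjoinRoot F) * ((m1 * m2 : ℤ) : AdjoinRoot F) := by
  unfold cubicSpan
  constructor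
  · intro hx
    rw [Submodule.mem_span_insert] at hx
    obtain ⟨c1, w, hw, rfl⟩ := hx
    rw [Submodule.mem_span_insert] at hw
    obtain ⟨c2, u, hu, rfl⟩ := hw
    rw [Submodule.mem_span_singleton] at hu
    obtain ⟨c3, rfl⟩ := hu
    exact ⟨c1, c2, c3, by simp only [zsmul_eq_mul]; ring⟩
  · rintro ⟨c1, c2, c3, rfl⟩
    simp only [← zsmul_eq_mul]
    refine Submodule.add_mem _ (Submodule.add_mem _ ?_ ?_) ?_ <;>
      refine Submodule.smul_mem _ _ (Submodule.subset_span ?_)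
    · exact Set.mem_insert _ _
    · exact Set.mem_insert_of_mem _ (Set.mem_insert _ _)
    · exact Set.mem_insert_of_mem _ (Set.mem_insert_of_mem _ rfl)

private lemma ideal_iff (a1 a2 a3 m1 m2 μ1 μ2 lam : ℤ) (hm1 : 0 < m1)
    (F : Polynomial ℤ)
    (hF : F = X ^ 3 + C a1 * X ^ 2 + C a2 * X + C a3) :
    (∀ x ∈ cubicSpan F a1 m1 m2 μ1 μ2 lam,
      AdjoinRoot.root F * x ∈ cubicSpan F a1 m1 m2 μ1 μ2 lam) ↔
    ((m2 ∣ lam + μ2 * (μ1 + μ2 + a1)) ∧ (m1 ∣ lam - a2 - μ1 * (μ1 + a1)) ∧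
      (m1 * m2 ∣ (μ2 - μ1) * lam - μ2 * (a2 + μ1 ^ 2 + μ1 * a1) - a3)) := by
  have hroot3 := root_cube F a1 a2 a3 hF
  set α := AdjoinRoot.root F with hα
  constructor
  · intro h
    have hb1 : (α ^ 2 + ((μ1 + a1 : ℤ) : AdjoinRoot F) * α + ((lam : ℤ) : AdjoinRoot F))
        ∈ cubicSpan F a1 m1 m2 μ1 μ2 lam :=
      Submodule.subset_span (Set.mem_insert _ _)
    have hb2 : (((m1 : ℤ) : AdjoinRoot F) * α - ((μ2 * m1 : ℤ) : AdjoinRoot F))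
        ∈ cubicSpan F a1 m1 m2 μ1 μ2 lam :=
      Submodule.subset_span (Set.mem_insert_of_mem _ (Set.mem_insert _ _))
    obtain ⟨c1, c2, c3, hc⟩ := (mem_cubicSpan F a1 m1 m2 μ1 μ2 lam _).mp (h _ hb1)
    obtain ⟨d1, d2, d3, hd⟩ := (mem_cubicSpan F a1 m1 m2 μ1 μ2 lam _).mp (h _ hb2)
    obtain ⟨e1, e2, e3⟩ := indep3 F a1 a2 a3 hF (μ1 - c1)
      (lam - a2 - c1 * (μ1 + a1) - c2 * m1)
      (-a3 - c1 * lam + c2 * (μ2 * m1) - c3 * (m1 * m2))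
      (by linear_combination (norm := (push_cast; ring1)) hc - hroot3)
    obtain ⟨f1, f2, f3⟩ := indep3 F a1 a2 a3 hF (m1 - d1)
      (-(μ2 * m1) - d1 * (μ1 + a1) - d2 * m1)
      (-d1 * lam + d2 * (μ2 * m1) - d3 * (m1 * m2))
      (by linear_combination (norm := (push_cast; ring1)) hd)
    refine ⟨⟨-d3, ?_⟩, ⟨c2, by linear_combination e2 - (μ1 + a1) * e1⟩,
      ⟨c3, by linear_combination e3 + μ2 * e2 - lam * e1 - μ2 * (μ1 + a1) * e1⟩⟩
    · have hcan : m1 * (lam + μ2 * (μ1 + μ2 + a1)) = m1 * (m2 * -d3) := by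
        linear_combination -f3 - μ2 * f2 + (μ2 * (μ1 + a1) + μ2 * μ2 - lam) * f1 + (2 * lam - μ2 ^ 2) * f1
      exact mul_left_cancel₀ hm1.ne' hcan
  · rintro ⟨⟨k, hk⟩, ⟨y, hy⟩, ⟨z, hz⟩⟩ x hx
    have hkR : ((lam : AdjoinRoot F) + μ2 * (μ1 + μ2 + a1)) = m2 * k := by
      have h' := congrArg (fun t : ℤ => (t : AdjoinRoot F)) hk
      push_cast at h'
      linear_combination h'
    have hyR : ((lam : AdjoinRoot F) - a2 - μ1 * (μ1 + a1)) = m1 * y := by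
      have h' := congrArg (fun t : ℤ => (t : AdjoinRoot F)) hy
      push_cast at h'
      linear_combination h'
    have hzR : (((μ2 : AdjoinRoot F) - μ1) * lam - μ2 * (a2 + μ1 ^ 2 + μ1 * a1) - a3)
        = m1 * m2 * z := by
      have h' := congrArg (fun t : ℤ => (t : AdjoinRoot F)) hz
      push_cast at h'
      linear_combination h'
    obtain ⟨c1, c2, c3, rfl⟩ := (mem_cubicSpan F a1 m1 m2 μ1 μ2 lam _).mp hx
    have h1 : α * (α ^ 2 + ((μ1 + a1 : ℤ) : AdjoinRoot F) * α + ((lam : ℤ) : AdjoinRoot F))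
        ∈ cubicSpan F a1 m1 m2 μ1 μ2 lam := by
      refine (mem_cubicSpan F a1 m1 m2 μ1 μ2 lam _).mpr ⟨μ1, y, z, ?_⟩
      push_cast
      linear_combination hroot3 + (α - (μ2 : AdjoinRoot F)) * hyR + hzR
    have h2 : α * (((m1 : ℤ) : AdjoinRoot F) * α - ((μ2 * m1 : ℤ) : AdjoinRoot F))
        ∈ cubicSpan F a1 m1 m2 μ1 μ2 lam := by
      refine (mem_cubicSpan F a1 m1 m2 μ1 μ2 lam _).mpr ⟨m1, -(μ1 + μ2 + a1), -k, ?_⟩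
      push_cast
      linear_combination (-(m1 : AdjoinRoot F)) * hkR
    have h3 : α * ((m1 * m2 : ℤ) : AdjoinRoot F) ∈ cubicSpan F a1 m1 m2 μ1 μ2 lam := by
      refine (mem_cubicSpan F a1 m1 m2 μ1 μ2 lam _).mpr ⟨0, m2, μ2, ?_⟩
      push_cast
      ring
    have hx' : α * ((c1 : AdjoinRoot F) * (AdjoinRoot.root F ^ 2
            + ((μ1 + a1 : ℤ) : AdjoinRoot F) * AdjoinRoot.root F + ((lam : ℤ) : AdjoinRoot F))
        + (c2 : AdjoinRoot F) * (((m1 : ℤ) : AdjoinRoot F) * AdjoinRoot.root F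
            - ((μ2 * m1 : ℤ) : AdjoinRoot F))
        + (c3 : AdjoinRoot F) * ((m1 * m2 : ℤ) : AdjoinRoot F))
        = (c1 : AdjoinRoot F) * (α * (α ^ 2 + ((μ1 + a1 : ℤ) : AdjoinRoot F) * α
            + ((lam : ℤ) : AdjoinRoot F)))
        + (c2 : AdjoinRoot F) * (α * (((m1 : ℤ) : AdjoinRoot F) * α
            - ((μ2 * m1 : ℤ) : AdjoinRoot F)))
        + (c3 : AdjoinRoot F) * (α * ((m1 * m2 : ℤ) : AdjoinRoot F)) := by ring
    rw [hx']
    exact Submodule.add_mem _ (Submodule.add_mem _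
      (by simpa only [zsmul_eq_mul] using Submodule.smul_mem _ c1 h1)
      (by simpa only [zsmul_eq_mul] using Submodule.smul_mem _ c2 h2))
      (by simpa only [zsmul_eq_mul] using Submodule.smul_mem _ c3 h3)

private lemma arith (a1 a2 a3 m1 m2 μ1 μ2 : ℤ) (hm1 : 0 < m1) (hm2 : 0 < m2)
    (h1 : m1 ∣ μ1 ^ 3 + a1 * μ1 ^ 2 + a2 * μ1 + a3)
    (h2 : m2 ∣ μ2 ^ 3 + a1 * μ2 ^ 2 + a2 * μ2 + a3)
    (hgcd : Int.gcd (Int.gcd m1 m2) (μ1 - μ2) = 1) :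
    ∃ lam : ℤ, ((m2 ∣ lam + μ2 * (μ1 + μ2 + a1)) ∧ (m1 ∣ lam - a2 - μ1 * (μ1 + a1)) ∧
      (m1 * m2 ∣ (μ2 - μ1) * lam - μ2 * (a2 + μ1 ^ 2 + μ1 * a1) - a3)) ∧
      ∀ lam' : ℤ, ((m2 ∣ lam' + μ2 * (μ1 + μ2 + a1)) ∧ (m1 ∣ lam' - a2 - μ1 * (μ1 + a1)) ∧
        (m1 * m2 ∣ (μ2 - μ1) * lam' - μ2 * (a2 + μ1 ^ 2 + μ1 * a1) - a3)) →
        lam' ≡ lam [ZMOD m1 * m2] := by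
  set dd : ℤ := (Int.gcd m1 m2 : ℤ) with hdd
  set Lv : ℤ := (Int.lcm m1 m2 : ℤ) with hLv
  have hcop : IsCoprime dd (μ1 - μ2) := Int.isCoprime_iff_gcd_eq_one.mpr hgcd
  have hddm1 : dd ∣ m1 := Int.gcd_dvd_left m1 m2
  have hddm2 : dd ∣ m2 := Int.gcd_dvd_right m1 m2
  have hm1L : m1 ∣ Lv := Int.dvd_lcm_left m1 m2
  have hm2L : m2 ∣ Lv := Int.dvd_lcm_right m1 m2
  have hdL : dd * Lv = m1 * m2 := by
    rw [hdd, hLv]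
    rw [← Int.natCast_mul, Int.gcd_mul_lcm]
    rw [Int.natCast_mul, Int.natAbs_of_nonneg hm1.le, Int.natAbs_of_nonneg hm2.le]
  -- S and its divisibility by dd
  obtain ⟨f1, hf1⟩ := h1
  obtain ⟨f2, hf2⟩ := h2
  have hddS : dd ∣ (μ1 ^ 2 + μ1 * μ2 + μ2 ^ 2 + a1 * (μ1 + μ2) + a2) := by
    refine hcop.dvd_of_dvd_mul_left ?_
    have : (μ1 - μ2) * (μ1 ^ 2 + μ1 * μ2 + μ2 ^ 2 + a1 * (μ1 + μ2) + a2)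
        = m1 * f1 - m2 * f2 := by linear_combination hf1 - hf2
    rw [this]
    exact dvd_sub ((hddm1).mul_right _) ((hddm2).mul_right _)
  obtain ⟨S', hS'⟩ := hddS
  -- Bezout for dd
  have hbez : dd = m1 * Int.gcdA m1 m2 + m2 * Int.gcdB m1 m2 := Int.gcd_eq_gcd_ab m1 m2
  set p := Int.gcdA m1 m2
  set q := Int.gcdB m1 m2
  set lam1 : ℤ := (a2 + μ1 * (μ1 + a1)) - m1 * p * S' with hlam1
  have hB1 : lam1 - a2 - μ1 * (μ1 + a1) = m1 * (-(p * S')) := by rw [hlam1]; ring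
  have hA1 : lam1 + μ2 * (μ1 + μ2 + a1) = m2 * (q * S') := by
    rw [hlam1]; linear_combination hS' + S' * hbez
  -- G(lam1) is divisible by lcm
  have hGm1 : m1 ∣ (μ2 - μ1) * lam1 - μ2 * (a2 + μ1 ^ 2 + μ1 * a1) - a3 := by
    refine ⟨(μ2 - μ1) * (-(p * S')) - f1, ?_⟩
    linear_combination (μ2 - μ1) * hB1 - hf1
  have hGm2 : m2 ∣ (μ2 - μ1) * lam1 - μ2 * (a2 + μ1 ^ 2 + μ1 * a1) - a3 := by
    refine ⟨(μ2 - μ1) * (q * S') - f2, ?_⟩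
    linear_combination (μ2 - μ1) * hA1 - hf2
  have hGL : Lv ∣ (μ2 - μ1) * lam1 - μ2 * (a2 + μ1 ^ 2 + μ1 * a1) - a3 :=
    Int.coe_lcm_dvd hGm1 hGm2
  obtain ⟨hG, hhG⟩ := hGL
  have hcop2 := hcop
  obtain ⟨r, s, hrs⟩ := hcop2
  set lam : ℤ := lam1 + Lv * (s * hG) with hlam
  refine ⟨lam, ⟨?_, ?_, ?_⟩, ?_⟩
  · obtain ⟨e, he⟩ := hm2L
    exact ⟨q * S' + e * (s * hG), by rw [hlam]; linear_combination hA1 + (s * hG) * he⟩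
  · obtain ⟨e, he⟩ := hm1L
    exact ⟨-(p * S') + e * (s * hG), by rw [hlam]; linear_combination hB1 + (s * hG) * he⟩
  · -- G(lam) = Lv*(hG + (μ2-μ1)*s*hG) = Lv*dd*(r*hG)
    refine ⟨r * hG, ?_⟩
    have : (μ2 - μ1) * lam - μ2 * (a2 + μ1 ^ 2 + μ1 * a1) - a3
        = Lv * (hG + (μ2 - μ1) * (s * hG)) := by
      rw [hlam]; linear_combination hhG
    rw [this, ← hdL]
    have h2 : hG + (μ2 - μ1) * (s * hG) = dd * (r * hG) := by
      linear_combination (-hG) * hrs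
    rw [h2]; ring
  · rintro lam' ⟨⟨k', hk'⟩, ⟨y', hy'⟩, ⟨z', hz'⟩⟩
    -- conditions for lam as proven above; derive them again
    have cA : m2 ∣ lam + μ2 * (μ1 + μ2 + a1) := by
      obtain ⟨e, he⟩ := hm2L
      exact ⟨q * S' + e * (s * hG), by rw [hlam]; linear_combination hA1 + (s * hG) * he⟩
    have cB : m1 ∣ lam - a2 - μ1 * (μ1 + a1) := by
      obtain ⟨e, he⟩ := hm1L
      exact ⟨-(p * S') + e * (s * hG), by rw [hlam]; linear_combination hB1 + (s * hG) * he⟩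
    have cC : m1 * m2 ∣ (μ2 - μ1) * lam - μ2 * (a2 + μ1 ^ 2 + μ1 * a1) - a3 := by
      refine ⟨r * hG, ?_⟩
      have h3 : (μ2 - μ1) * lam - μ2 * (a2 + μ1 ^ 2 + μ1 * a1) - a3
          = Lv * (hG + (μ2 - μ1) * (s * hG)) := by
        rw [hlam]; linear_combination hhG
      have h2 : hG + (μ2 - μ1) * (s * hG) = dd * (r * hG) := by
        linear_combination (-hG) * hrs
      rw [h3, ← hdL, h2]; ring
    -- delta
    have hd1 : m1 ∣ lam' - lam := by
      obtain ⟨u, hu⟩ := cB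
      exact ⟨y' - u, by linear_combination hy' - hu⟩
    have hd2 : m2 ∣ lam' - lam := by
      obtain ⟨u, hu⟩ := cA
      exact ⟨k' - u, by linear_combination hk' - hu⟩
    have hdm : m1 * m2 ∣ (μ2 - μ1) * (lam' - lam) := by
      obtain ⟨u, hu⟩ := cC
      exact ⟨z' - u, by linear_combination hz' - hu⟩
    obtain ⟨e, he⟩ := Int.coe_lcm_dvd hd1 hd2
    have hLne : Lv ≠ 0 := by
      have hmm : 0 < m1 * m2 := mul_pos hm1 hm2
      intro h0
      rw [h0, mul_zero] at hdL
      exact hmm.ne' hdL.symm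
    have hdd_e : dd ∣ (μ2 - μ1) * e := by
      obtain ⟨u, hu⟩ := hdm
      have hcancel : (μ2 - μ1) * e * Lv = dd * u * Lv := by
        linear_combination hu - (μ2 - μ1) * he - u * hdL
      exact ⟨u, mul_right_cancel₀ hLne hcancel⟩
    have hdd_e' : dd ∣ e := by
      refine IsCoprime.dvd_of_dvd_mul_left hcop ?_
      have hswap : (μ1 - μ2) * e = -((μ2 - μ1) * e) := by ring
      rw [hswap]
      exact hdd_e.neg_right
    obtain ⟨w, hw⟩ := hdd_e'
    have : lam' - lam = m1 * m2 * w := by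
      rw [← hdL]
      linear_combination he + Lv * hw
    exact Int.ModEq.symm (Int.modEq_iff_dvd.mpr ⟨w, this⟩)

/-- given roots `μ₁ mod m₁`, `μ₂ mod m₂` of the monic cubic `F`
with `gcd(m₁, m₂, μ₁ - μ₂) = 1`, there is a `λ`, unique modulo `m₁m₂`, making
the lattice `cubicSpan` an ideal of `ℤ[X]/(F)`. -/
theorem stmt5 (a1 a2 a3 m1 m2 μ1 μ2 : ℤ) (hm1 : 0 < m1) (hm2 : 0 < m2)
    (F : Polynomial ℤ)
    (hF : F = X ^ 3 + C a1 * X ^ 2 + C a2 * X + C a3)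
    (h1 : m1 ∣ F.eval μ1) (h2 : m2 ∣ F.eval μ2)
    (hgcd : Int.gcd (Int.gcd m1 m2) (μ1 - μ2) = 1) :
    ∃ lam : ℤ,
      (∀ x ∈ cubicSpan F a1 m1 m2 μ1 μ2 lam,
        AdjoinRoot.root F * x ∈ cubicSpan F a1 m1 m2 μ1 μ2 lam) ∧
      ∀ lam' : ℤ,
        (∀ x ∈ cubicSpan F a1 m1 m2 μ1 μ2 lam',
          AdjoinRoot.root F * x ∈ cubicSpan F a1 m1 m2 μ1 μ2 lam') →
        lam' ≡ lam [ZMOD m1 * m2] := by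
  have hev1 : F.eval μ1 = μ1 ^ 3 + a1 * μ1 ^ 2 + a2 * μ1 + a3 := by simp [hF]
  have hev2 : F.eval μ2 = μ2 ^ 3 + a1 * μ2 ^ 2 + a2 * μ2 + a3 := by simp [hF]
  rw [hev1] at h1; rw [hev2] at h2
  obtain ⟨lam, hconds, huniq⟩ := arith a1 a2 a3 m1 m2 μ1 μ2 hm1 hm2 h1 h2 hgcd
  refine ⟨lam, (ideal_iff a1 a2 a3 m1 m2 μ1 μ2 lam hm1 F hF).mpr hconds, ?_⟩
  intro lam' hlam'
  exact huniq lam' ((ideal_iff a1 a2 a3 m1 m2 μ1 μ2 lam' hm1 F hF).mp hlam')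
end

section
/- Let F be a monic cubic polynomial over Z with discriminant D, and suppose μ_1, μ_2, m_1, m_2 are integers with m_1, m_2 > 0, F(μ_1) ≡ 0 (mod m_1), F(μ_2) ≡ 0 (mod m_2), and there is an integer λ with λ ≡ μ_1^2 + a_1μ_1 + a_2 (mod m_1) and λ ≡ −μ_2^2 − μ_1μ_2 − a_1μ_2 (mod m_2). If a prime p divides gcd(m_1, m_2, μ_1 − μ_2), then p divides D. -/
/-- for the monic cubic `F = X³ + a₁X² + a₂X + a₃` with
discriminant `D`, if `μ₁, μ₂` are roots mod `m₁, m₂`, the congruences for `λ`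
are simultaneously solvable, and a prime `p` divides `gcd(m₁, m₂, μ₁ - μ₂)`,
then `p` divides `D`. -/
theorem stmt6 (a1 a2 a3 m1 m2 μ1 μ2 : ℤ) (hm1 : 0 < m1) (hm2 : 0 < m2)
    (h1 : m1 ∣ μ1 ^ 3 + a1 * μ1 ^ 2 + a2 * μ1 + a3)
    (h2 : m2 ∣ μ2 ^ 3 + a1 * μ2 ^ 2 + a2 * μ2 + a3)
    (hlam : ∃ lam : ℤ,
      lam ≡ μ1 ^ 2 + a1 * μ1 + a2 [ZMOD m1] ∧
      lam ≡ -μ2 ^ 2 - μ1 * μ2 - a1 * μ2 [ZMOD m2])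
    (p : ℤ) (hp : Prime p)
    (hpm1 : p ∣ m1) (hpm2 : p ∣ m2) (hpμ : p ∣ μ1 - μ2) :
    p ∣ a1 ^ 2 * a2 ^ 2 - 4 * a2 ^ 3 - 4 * a1 ^ 3 * a3
        + 18 * a1 * a2 * a3 - 27 * a3 ^ 2 := by
  obtain ⟨lam, hl1, hl2⟩ := hlam
  have d1 : p ∣ μ1 ^ 3 + a1 * μ1 ^ 2 + a2 * μ1 + a3 := hpm1.trans h1
  have e1 : p ∣ μ1 ^ 2 + a1 * μ1 + a2 - lam := hpm1.trans hl1.dvd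
  have e2 : p ∣ -μ2 ^ 2 - μ1 * μ2 - a1 * μ2 - lam := hpm2.trans hl2.dvd
  -- derivative divisibility: p ∣ F'(μ1)
  have g : p ∣ 3 * μ1 ^ 2 + 2 * a1 * μ1 + a2 := by
    obtain ⟨x, hx⟩ := e1
    obtain ⟨y, hy⟩ := e2
    obtain ⟨z, hz⟩ := hpμ
    refine ⟨x - y + z * (2 * μ1 + μ2 + a1), ?_⟩
    linear_combination hx - hy + (2 * μ1 + μ2 + a1) * hz
  obtain ⟨s, hs⟩ := d1
  obtain ⟨t, ht⟩ := g
  refine ⟨(18 * a2 - 6 * a1 ^ 2) * μ1 * s + (-27 * a3 + 15 * a1 * a2 - 4 * a1 ^ 3) * s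
      + ((-6 * a2 + 2 * a1 ^ 2) * μ1 ^ 2 + (9 * a3 - 7 * a1 * a2 + 2 * a1 ^ 3) * μ1
        + (-4 * a2 ^ 2 + 3 * a1 * a3 + a1 ^ 2 * a2)) * t, ?_⟩
  linear_combination ((18 * a2 - 6 * a1 ^ 2) * μ1 + (-27 * a3 + 15 * a1 * a2 - 4 * a1 ^ 3)) * hs
    + ((-6 * a2 + 2 * a1 ^ 2) * μ1 ^ 2 + (9 * a3 - 7 * a1 * a2 + 2 * a1 ^ 3) * μ1
      + (-4 * a2 ^ 2 + 3 * a1 * a3 + a1 ^ 2 * a2)) * ht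
end

section
/- Let F be monic of degree d over Z, α the class of X in R = Z[X]/(F). For roots μ mod m and ν mod n of F (i.e., m | F(μ), n | F(ν)), let I and J be the corresponding ideals, namely the Z-spans of {α^j − μ^j : 1 ≤ j ≤ d−1} ∪ {m} and {α^j − ν^j : 1 ≤ j ≤ d−1} ∪ {n} respectively. Then I ⊆ J if and only if n divides m and μ ≡ ν (mod n). -/
/-- for roots `μ mod m` and `ν mod n` of `F` with corresponding
ideals `I` and `J`, we have `I ⊆ J` iff `n ∣ m` and `μ ≡ ν (mod n)`. -/
theorem stmt9 (d : ℕ) (hd : 2 ≤ d) (F : Polynomial ℤ) (hF : F.Monic)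
    (hdeg : F.natDegree = d)
    (m n μ ν : ℤ) (hm : 0 < m) (hn : 0 < n)
    (hμ : m ∣ F.eval μ) (hν : n ∣ F.eval ν) :
    rootSpan F d m μ ≤ rootSpan F d n ν ↔ (n ∣ m ∧ μ ≡ ν [ZMOD n]) := by
  have hnn : (n.natAbs : ℤ) = n := Int.natAbs_of_nonneg hn.le
  -- the evaluation map φ : AdjoinRoot F → ZMod n.natAbs, α ↦ ν
  have hroot : F.eval₂ (Int.castRingHom (ZMod n.natAbs))
      ((Int.castRingHom (ZMod n.natAbs)) ν) = 0 := by
    rw [Polynomial.eval₂_at_apply]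
    simp only [Int.coe_castRingHom]
    rw [ZMod.intCast_zmod_eq_zero_iff_dvd, hnn]
    exact hν
  set φ : AdjoinRoot F →+* ZMod n.natAbs :=
    AdjoinRoot.lift (Int.castRingHom (ZMod n.natAbs))
      ((Int.castRingHom (ZMod n.natAbs)) ν) hroot with hφ
  have hφroot : φ (AdjoinRoot.root F) = (ν : ZMod n.natAbs) := by
    rw [hφ, AdjoinRoot.lift_root]
    simp
  have hker : ∀ x ∈ rootSpan F d n ν, φ x = 0 := by
    intro x hx
    induction hx using Submodule.span_induction with
    | mem y hy =>
      rcases hy with hy | ⟨j, hj, rfl⟩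
      · rcases hy with rfl
        rw [map_intCast, ZMod.intCast_zmod_eq_zero_iff_dvd, hnn]
      · simp [map_sub, map_pow, hφroot, map_intCast]
    | zero => simp
    | add a b _ _ ha hb => rw [map_add, ha, hb, add_zero]
    | smul z a _ ha => rw [map_zsmul, ha, smul_zero]
  constructor
  · intro h
    have hmI : (m : AdjoinRoot F) ∈ rootSpan F d m μ :=
      Submodule.subset_span (Or.inl rfl)
    have h1 : AdjoinRoot.root F - (μ : AdjoinRoot F) ∈ rootSpan F d m μ := by
      refine Submodule.subset_span (Or.inr ⟨1, ⟨le_refl 1, by omega⟩, ?_⟩)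
      simp
    constructor
    · have := hker _ (h hmI)
      rw [map_intCast, ZMod.intCast_zmod_eq_zero_iff_dvd, hnn] at this
      exact this
    · have := hker _ (h h1)
      rw [map_sub, hφroot, map_intCast] at this
      have h2 : ((ν - μ : ℤ) : ZMod n.natAbs) = 0 := by
        push_cast
        exact this
      rw [ZMod.intCast_zmod_eq_zero_iff_dvd, hnn] at h2
      exact Int.modEq_iff_dvd.mpr h2
  · rintro ⟨hnm, hμν⟩
    apply Submodule.span_le.mpr
    rintro x (rfl | ⟨j, hj, rfl⟩)
    · obtain ⟨k, hk⟩ := hnm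
      have hnJ : (n : AdjoinRoot F) ∈ rootSpan F d n ν :=
        Submodule.subset_span (Or.inl rfl)
      have : (m : AdjoinRoot F) = k • (n : AdjoinRoot F) := by
        rw [zsmul_eq_mul, hk]; push_cast; ring
      rw [this]
      exact Submodule.smul_mem _ k hnJ
    · obtain ⟨k, hk⟩ := (hμν.pow j).dvd
      have hnJ : (n : AdjoinRoot F) ∈ rootSpan F d n ν :=
        Submodule.subset_span (Or.inl rfl)
      have hgen : AdjoinRoot.root F ^ j - (ν : AdjoinRoot F) ^ j ∈ rootSpan F d n ν :=
        Submodule.subset_span (Or.inr ⟨j, hj, rfl⟩)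
      have hk' : (ν : AdjoinRoot F) ^ j - (μ : AdjoinRoot F) ^ j
          = (n : AdjoinRoot F) * (k : AdjoinRoot F) := by
        have h3 := congrArg (fun z : ℤ => (z : AdjoinRoot F)) hk
        push_cast at h3
        linear_combination h3
      have heq : AdjoinRoot.root F ^ j - (μ : AdjoinRoot F) ^ j
          = (AdjoinRoot.root F ^ j - (ν : AdjoinRoot F) ^ j) + k • (n : AdjoinRoot F) := by
        rw [zsmul_eq_mul]
        linear_combination hk'
      show AdjoinRoot.root F ^ j - (μ : AdjoinRoot F) ^ j ∈
        (rootSpan F d n ν : Set (AdjoinRoot F))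
      rw [heq]
      exact Submodule.add_mem _ hgen (Submodule.smul_mem _ k hnJ)
end

section
/- Let F be monic of degree d over Z, α the class of X in R = Z[X]/(F). Let μ mod m and ν mod n be roots of F with gcd(m, n) = 1, with associated ideals I and J (Z-spans of {α^j − μ^j} ∪ {m} and {α^j − ν^j} ∪ {n}). Let μ̃ mod mn be the unique residue class with μ̃ ≡ μ (mod m) and μ̃ ≡ ν (mod n). Then F(μ̃) ≡ 0 (mod mn) and the product ideal IJ equals the Z-span of {α^j − μ̃^j : 1 ≤ j ≤ d−1} ∪ {mn}. -/
open Polynomial AdjoinRoot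

lemma intCast_mem_rootSpan (F : Polynomial ℤ) (d : ℕ) (m μ k : ℤ) :
    ((m * k : ℤ) : AdjoinRoot F) ∈ rootSpan F d m μ := by
  have h : ((m * k : ℤ) : AdjoinRoot F) = k • (m : AdjoinRoot F) := by
    push_cast; rw [zsmul_eq_mul]; ring
  rw [h]
  exact Submodule.smul_mem _ _ (Submodule.subset_span (Or.inl rfl))

lemma mk_mem_rootSpan (F : Polynomial ℤ) (d : ℕ) (hF : F.Monic) (hdeg : F.natDegree = d)
    (m μ : ℤ) (hμ : m ∣ F.eval μ) (g : Polynomial ℤ) (hg : m ∣ g.eval μ) :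
    AdjoinRoot.mk F g ∈ rootSpan F d m μ := by
  rcases Nat.eq_zero_or_pos d with hd | hd
  · -- F = 1, trivial ring
    subst hd
    have hF1 : F = 1 := (hF.natDegree_eq_zero).1 hdeg
    subst hF1
    have h2 : (1 : AdjoinRoot (1 : Polynomial ℤ)) = 0 := by
      rw [← map_one (AdjoinRoot.mk (1 : Polynomial ℤ))]
      exact AdjoinRoot.mk_self
    have hsub : Subsingleton (AdjoinRoot (1 : Polynomial ℤ)) :=
      subsingleton_of_zero_eq_one h2.symm
    have h3 : AdjoinRoot.mk 1 g = 0 := Subsingleton.elim _ _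
    rw [h3]; exact Submodule.zero_mem _
  · set r := g %ₘ F with hr
    have hF1 : F ≠ 1 := by
      intro h; rw [h] at hdeg; simp at hdeg; omega
    have hlt : r.natDegree < d := by
      rw [← hdeg]; exact Polynomial.natDegree_modByMonic_lt g hF hF1
    have hmkeq : AdjoinRoot.mk F g = AdjoinRoot.mk F r := by
      conv_lhs => rw [← Polynomial.modByMonic_add_div g F]
      rw [map_add, map_mul, AdjoinRoot.mk_self]
      simp [r]
    have hrμ : m ∣ r.eval μ := by
      have heq2 : r = g - F * (g /ₘ F) := by
        rw [hr, eq_sub_iff_add_eq, Polynomial.modByMonic_add_div g F]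
      rw [heq2, Polynomial.eval_sub, Polynomial.eval_mul]
      exact dvd_sub hg (Dvd.dvd.mul_right hμ _)
    rw [hmkeq, ← AdjoinRoot.aeval_eq]
    rw [Polynomial.aeval_eq_sum_range' hlt (root F)]
    obtain ⟨k, hk⟩ := hrμ
    have key : (∑ i ∈ Finset.range d, r.coeff i • (root F) ^ i)
        = (∑ i ∈ Finset.range d, r.coeff i • ((root F) ^ i - (μ : AdjoinRoot F) ^ i))
          + ((r.eval μ : ℤ) : AdjoinRoot F) := by
      rw [Polynomial.eval_eq_sum_range' hlt μ]
      push_cast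
      rw [Finset.sum_congr rfl (fun i _ => smul_sub (r.coeff i) ((root F)^i) ((μ:AdjoinRoot F)^i)),
        Finset.sum_sub_distrib]
      simp [zsmul_eq_mul]
    rw [key]
    refine Submodule.add_mem _ ?_ ?_
    · refine Submodule.sum_mem _ fun i hi => ?_
      rcases Nat.eq_zero_or_pos i with h0 | h0
      · subst h0; simp
      · refine Submodule.smul_mem _ _ (Submodule.subset_span (Or.inr ?_))
        exact ⟨i, ⟨h0, Finset.mem_range.1 hi⟩, rfl⟩
    · rw [hk]; exact intCast_mem_rootSpan F d m μ k

lemma rootSpan_eq_ideal (F : Polynomial ℤ) (d : ℕ) (hF : F.Monic) (hdeg : F.natDegree = d)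
    (m μ : ℤ) (hμ : m ∣ F.eval μ) :
    rootSpan F d m μ =
      (Ideal.span {(m : AdjoinRoot F), AdjoinRoot.root F - (μ : AdjoinRoot F)}).restrictScalars ℤ := by
  apply le_antisymm
  · rw [rootSpan, Submodule.span_le]
    rintro x (rfl | ⟨j, hj, rfl⟩)
    · exact Ideal.subset_span (by simp)
    · refine SetLike.mem_coe.2 ?_
      show AdjoinRoot.root F ^ j - (μ : AdjoinRoot F) ^ j ∈ _
      obtain ⟨c, hc⟩ := sub_dvd_pow_sub_pow (AdjoinRoot.root F) (μ : AdjoinRoot F) j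
      rw [hc]
      exact Ideal.mul_mem_right _ _ (Ideal.subset_span (by simp))
  · intro x hx
    rw [Submodule.restrictScalars_mem, Ideal.mem_span_pair] at hx
    obtain ⟨a, b, hab⟩ := hx
    obtain ⟨p, rfl⟩ := AdjoinRoot.mk_surjective (g := F) a
    obtain ⟨q, rfl⟩ := AdjoinRoot.mk_surjective (g := F) b
    have hx2 : x = AdjoinRoot.mk F (p * Polynomial.C m + q * (Polynomial.X - Polynomial.C μ)) := by
      rw [← hab]
      push_cast [map_add, map_mul, map_sub, AdjoinRoot.mk_C, AdjoinRoot.mk_X]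
      rfl
    rw [hx2]
    apply mk_mem_rootSpan F d hF hdeg m μ hμ
    simp

lemma span_pair_mul_span_pair_eq (F : Polynomial ℤ) (m n μ ν μt : ℤ)
    (h1 : m ∣ μt - μ) (h2 : n ∣ μt - ν) (hcop : IsCoprime m n) :
    Ideal.span {(m : AdjoinRoot F), AdjoinRoot.root F - (μ : AdjoinRoot F)} *
      Ideal.span {(n : AdjoinRoot F), AdjoinRoot.root F - (ν : AdjoinRoot F)} =
    Ideal.span {((m * n : ℤ) : AdjoinRoot F), AdjoinRoot.root F - (μt : AdjoinRoot F)} := by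
  set R := AdjoinRoot F
  set α := AdjoinRoot.root F
  set I := Ideal.span {(m : R), α - (μ : R)}
  set J := Ideal.span {(n : R), α - (ν : R)}
  set K := Ideal.span {((m * n : ℤ) : R), α - (μt : R)}
  obtain ⟨k₁, hk₁⟩ := h1
  obtain ⟨k₂, hk₂⟩ := h2
  have hmnK : ∀ c : R, ((m * n : ℤ) : R) * c ∈ K :=
    fun c => Ideal.mul_mem_right _ _ (Ideal.subset_span (by simp))
  have hαK : ∀ c : R, (α - (μt : R)) * c ∈ K :=
    fun c => Ideal.mul_mem_right _ _ (Ideal.subset_span (by simp))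
  -- key memberships in K
  have hmν : (m : R) * (α - (ν : R)) ∈ K := by
    have heq : (m : R) * (α - (ν : R))
        = (α - (μt : R)) * (m : R) + ((m * n : ℤ) : R) * (k₂ : R) := by
      have : ((m * (μt - ν) : ℤ) : R) = ((m * n : ℤ) : R) * (k₂ : R) := by
        push_cast +zetaDelta [hk₂]; ring
      push_cast +zetaDelta at this ⊢
      linear_combination this
    rw [heq]
    exact add_mem (hαK _) (hmnK _)
  have hnμ : (n : R) * (α - (μ : R)) ∈ K := by
    have heq : (n : R) * (α - (μ : R))
        = (α - (μt : R)) * (n : R) + ((m * n : ℤ) : R) * (k₁ : R) := by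
      have : ((n * (μt - μ) : ℤ) : R) = ((m * n : ℤ) : R) * (k₁ : R) := by
        push_cast +zetaDelta [hk₁]; ring
      push_cast +zetaDelta at this ⊢
      linear_combination this
    rw [heq]
    exact add_mem (hαK _) (hmnK _)
  have hμν : (α - (μ : R)) * (α - (ν : R)) ∈ K := by
    have heq : (α - (μ : R)) * (α - (ν : R))
        = (α - (μt : R)) * (α - ((μ : R) + (ν : R) - (μt : R)))
          + ((m * n : ℤ) : R) * ((k₁ * k₂ : ℤ) : R) := by
      have : (((μt - μ) * (μt - ν) : ℤ) : R) = ((m * n : ℤ) : R) * ((k₁ * k₂ : ℤ) : R) := by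
        push_cast +zetaDelta [hk₁, hk₂]; ring
      push_cast +zetaDelta at this ⊢
      linear_combination this
    rw [heq]
    exact add_mem (hαK _) (hmnK _)
  apply le_antisymm
  · refine Ideal.mul_le.2 fun r hr s hs => ?_
    obtain ⟨a₁, b₁, rfl⟩ := Ideal.mem_span_pair.1 hr
    obtain ⟨a₂, b₂, rfl⟩ := Ideal.mem_span_pair.1 hs
    have hexp : (a₁ * (m : R) + b₁ * (α - (μ : R))) * (a₂ * (n : R) + b₂ * (α - (ν : R)))
        = (a₁ * a₂) * (((m * n : ℤ) : R))
          + (a₂ * b₁) * ((n : R) * (α - (μ : R)))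
          + (a₁ * b₂) * ((m : R) * (α - (ν : R)))
          + (b₁ * b₂) * ((α - (μ : R)) * (α - (ν : R))) := by
      push_cast +zetaDelta; ring
    rw [hexp]
    refine add_mem (add_mem (add_mem ?_ ?_) ?_) ?_
    · exact Ideal.mul_mem_left _ _ (Ideal.subset_span (by simp))
    · exact Ideal.mul_mem_left _ _ hnμ
    · exact Ideal.mul_mem_left _ _ hmν
    · exact Ideal.mul_mem_left _ _ hμν
  · -- K ≤ I * J
    have hmI : (m : R) ∈ I := Ideal.subset_span (by simp)
    have hnJ : (n : R) ∈ J := Ideal.subset_span (by simp)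
    have hμI : α - (μ : R) ∈ I := Ideal.subset_span (by simp)
    have hνJ : α - (ν : R) ∈ J := Ideal.subset_span (by simp)
    have hmα : (m : R) * (α - (μt : R)) ∈ I * J := by
      have heq : (m : R) * (α - (μt : R))
          = (m : R) * (α - (ν : R)) - (m : R) * ((n : R) * (k₂ : R)) := by
        have : ((μt - ν : ℤ) : R) = (n : R) * (k₂ : R) := by push_cast +zetaDelta [hk₂]; ring
        push_cast +zetaDelta at this ⊢
        linear_combination (-(m : R)) * this
      rw [heq]
      exact sub_mem (Ideal.mul_mem_mul hmI hνJ)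
        (Ideal.mul_mem_mul hmI (Ideal.mul_mem_right _ _ hnJ))
    have hnα : (n : R) * (α - (μt : R)) ∈ I * J := by
      have heq : (n : R) * (α - (μt : R))
          = (α - (μ : R)) * (n : R) - ((m : R) * (k₁ : R)) * (n : R) := by
        have : ((μt - μ : ℤ) : R) = (m : R) * (k₁ : R) := by push_cast +zetaDelta [hk₁]; ring
        push_cast +zetaDelta at this ⊢
        linear_combination (-(n : R)) * this
      rw [heq]
      exact sub_mem (Ideal.mul_mem_mul hμI hnJ)
        (Ideal.mul_mem_mul (Ideal.mul_mem_right _ _ hmI) hnJ)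
    rw [Ideal.span_le]
    rintro x (rfl | rfl)
    · refine SetLike.mem_coe.2 ?_
      have : ((m * n : ℤ) : R) = (m : R) * (n : R) := by push_cast +zetaDelta; ring
      rw [this]
      exact Ideal.mul_mem_mul hmI hnJ
    · refine SetLike.mem_coe.2 ?_
      obtain ⟨a, b, hab⟩ := hcop
      have heq : α - (μt : R) = (a : R) * ((m : R) * (α - (μt : R)))
          + (b : R) * ((n : R) * (α - (μt : R))) := by
        have : ((a * m + b * n : ℤ) : R) = 1 := by rw [hab]; push_cast +zetaDelta; ring
        push_cast +zetaDelta at this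
        linear_combination (α - (μt : R)) * this.symm
      rw [heq]
      exact add_mem (Ideal.mul_mem_left _ _ hmα) (Ideal.mul_mem_left _ _ hnα)

lemma restrictScalars_mul_ideal (F : Polynomial ℤ) (I J : Ideal (AdjoinRoot F)) :
    (I.restrictScalars ℤ) * (J.restrictScalars ℤ) = (I * J).restrictScalars ℤ := by
  apply le_antisymm
  · refine Submodule.mul_le.2 fun a ha b hb => ?_
    rw [Submodule.restrictScalars_mem] at ha hb ⊢
    exact Ideal.mul_mem_mul ha hb
  · intro x hx
    rw [Submodule.restrictScalars_mem] at hx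
    exact Submodule.mul_induction_on hx (fun a ha b hb => Submodule.mul_mem_mul ha hb)
      (fun x y hx hy => add_mem hx hy)


/-- for roots `μ mod m` and `ν mod n` of `F` with `gcd(m,n) = 1`
and CRT lift `μ̃ mod mn`, we have `F(μ̃) ≡ 0 (mod mn)` and the product of the
associated ideals is the ideal associated to `μ̃ mod mn`. -/
theorem stmt10 (d : ℕ) (F : Polynomial ℤ) (hF : F.Monic) (hdeg : F.natDegree = d)
    (m n μ ν : ℤ) (hm : 0 < m) (hn : 0 < n)
    (hμ : m ∣ F.eval μ) (hν : n ∣ F.eval ν)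
    (hcop : IsCoprime m n)
    (μt : ℤ) (hμt1 : μt ≡ μ [ZMOD m]) (hμt2 : μt ≡ ν [ZMOD n]) :
    (m * n) ∣ F.eval μt ∧
      rootSpan F d m μ * rootSpan F d n ν = rootSpan F d (m * n) μt := by
  have h1 : m ∣ μt - μ := Int.ModEq.dvd hμt1.symm
  have h2 : n ∣ μt - ν := Int.ModEq.dvd hμt2.symm
  have hFm : m ∣ F.eval μt := by
    have hd : m ∣ F.eval μt - F.eval μ :=
      dvd_trans h1 (Polynomial.sub_dvd_eval_sub μt μ F)
    have := dvd_add hd hμ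
    simpa using this
  have hFn : n ∣ F.eval μt := by
    have hd : n ∣ F.eval μt - F.eval ν :=
      dvd_trans h2 (Polynomial.sub_dvd_eval_sub μt ν F)
    have := dvd_add hd hν
    simpa using this
  have hmn : (m * n) ∣ F.eval μt := hcop.mul_dvd hFm hFn
  refine ⟨hmn, ?_⟩
  rw [rootSpan_eq_ideal F d hF hdeg m μ hμ, rootSpan_eq_ideal F d hF hdeg n ν hν,
    restrictScalars_mul_ideal, span_pair_mul_span_pair_eq F m n μ ν μt h1 h2 hcop,
    ← rootSpan_eq_ideal F d hF hdeg (m * n) μt hmn]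
end

section
/- Let a, b, c, a', b', c' be integers with gcd(a,b,c) = 1, gcd(a',b',c') = 1, and a·a' + b·b' + c·c' = 0. Then there exists γ ∈ SL(3, Z) such that the bottom row of γ is (a', b', c') and the first column of γ^{−1} is (a, b, c)^T. Moreover γ is unique up to left multiplication by upper-triangular unipotent integer matrices. -/
lemma bez3 (a b c : ℤ) (h : Int.gcd (Int.gcd a b) c = 1) : ∃ x y z, a*x + b*y + c*z = 1 := by
  have h2 := Int.gcd_eq_gcd_ab a b
  have h1 := Int.gcd_eq_gcd_ab ((Int.gcd a b : ℤ)) c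
  rw [h] at h1
  refine ⟨Int.gcdA a b * Int.gcdA (↑(Int.gcd a b)) c, Int.gcdB a b * Int.gcdA (↑(Int.gcd a b)) c,
    Int.gcdB (↑(Int.gcd a b)) c, ?_⟩
  push_cast at h1
  linear_combination -h1 - Int.gcdA (↑(Int.gcd a b)) c * h2


/-- given Plücker coordinates `a, b, c, a', b', c'` with
`gcd(a,b,c) = gcd(a',b',c') = 1` and `aa' + bb' + cc' = 0`, there is a matrix
`γ ∈ SL(3,ℤ)` whose bottom row is `(a', b', c')` and whose inverse has first
column `(a, b, c)ᵀ`, unique up to left multiplication by upper-triangular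
unipotent integer matrices. -/
theorem stmt12 (a b c a' b' c' : ℤ)
    (h1 : Int.gcd (Int.gcd a b) c = 1)
    (h2 : Int.gcd (Int.gcd a' b') c' = 1)
    (h3 : a * a' + b * b' + c * c' = 0) :
    ∃ γ : Matrix (Fin 3) (Fin 3) ℤ, γ.det = 1 ∧
      (γ 2 0 = a' ∧ γ 2 1 = b' ∧ γ 2 2 = c') ∧
      (γ⁻¹ 0 0 = a ∧ γ⁻¹ 1 0 = b ∧ γ⁻¹ 2 0 = c) ∧
      ∀ δ : Matrix (Fin 3) (Fin 3) ℤ, δ.det = 1 →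
        (δ 2 0 = a' ∧ δ 2 1 = b' ∧ δ 2 2 = c') →
        (δ⁻¹ 0 0 = a ∧ δ⁻¹ 1 0 = b ∧ δ⁻¹ 2 0 = c) →
        ∃ u : Matrix (Fin 3) (Fin 3) ℤ,
          (u 0 0 = 1 ∧ u 1 1 = 1 ∧ u 2 2 = 1 ∧
            u 1 0 = 0 ∧ u 2 0 = 0 ∧ u 2 1 = 0) ∧
          δ = u * γ := by
  obtain ⟨x, y, z, hb1⟩ := bez3 a b c h1
  obtain ⟨p, q, r, hb2⟩ := bez3 a' b' c' h2
  set γ : Matrix (Fin 3) (Fin 3) ℤ :=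
    !![x, y, z; q*c - r*b, r*a - p*c, p*b - q*a; a', b', c'] with hγ
  have k1 : (r*a - p*c)*c' - (p*b - q*a)*b' = a := by linear_combination a*hb2 - p*h3
  have k2 : (p*b - q*a)*a' - (q*c - r*b)*c' = b := by linear_combination b*hb2 - q*h3
  have k3 : (q*c - r*b)*b' - (r*a - p*c)*a' = c := by linear_combination c*hb2 - r*h3
  have hdet : γ.det = 1 := by
    rw [hγ, Matrix.det_fin_three]
    simp only [Matrix.cons_val', Matrix.cons_val_zero, Matrix.cons_val_one, Matrix.head_cons,
      Matrix.empty_val', Matrix.cons_val_fin_one, Matrix.head_fin_const, Matrix.of_apply,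
      Matrix.cons_val_two, Matrix.tail_cons]
    linear_combination x*k1 + y*k2 + z*k3 + hb1
  have hunit : IsUnit γ.det := by rw [hdet]; exact isUnit_one
  have hinv : γ⁻¹ = γ.adjugate := by rw [Matrix.inv_def, hdet]; simp
  have e20 : γ 2 0 = a' := by simp [hγ]
  have e21 : γ 2 1 = b' := by simp [hγ]
  have e22 : γ 2 2 = c' := by simp [hγ]
  have i00 : γ⁻¹ 0 0 = a := by
    rw [hinv, Matrix.adjugate_fin_three]
    simp [hγ]
    linear_combination k1
  have i10 : γ⁻¹ 1 0 = b := by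
    rw [hinv, Matrix.adjugate_fin_three]
    simp [hγ]
    linear_combination k2
  have i20 : γ⁻¹ 2 0 = c := by
    rw [hinv, Matrix.adjugate_fin_three]
    simp [hγ]
    linear_combination k3
  refine ⟨γ, hdet, ⟨e20, e21, e22⟩, ⟨i00, i10, i20⟩, ?_⟩
  intro δ hdδ ⟨d20, d21, d22⟩ ⟨j00, j10, j20⟩
  have hunitδ : IsUnit δ.det := by rw [hdδ]; exact isUnit_one
  refine ⟨δ * γ⁻¹, ?_, ?_⟩
  · have hδδ := Matrix.mul_nonsing_inv δ hunitδ
    have hγγ := Matrix.mul_nonsing_inv γ hunit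
    have key : ∀ i : Fin 3, δ i 0 * a + δ i 1 * b + δ i 2 * c = (1 : Matrix (Fin 3) (Fin 3) ℤ) i 0 := by
      intro i
      rw [← hδδ]
      rw [Matrix.mul_apply, Fin.sum_univ_three, j00, j10, j20]
    have u0 : ∀ i : Fin 3, (δ * γ⁻¹) i 0 = (1 : Matrix (Fin 3) (Fin 3) ℤ) i 0 := by
      intro i
      rw [Matrix.mul_apply, Fin.sum_univ_three, i00, i10, i20]
      exact key i
    have u2 : ∀ j : Fin 3, (δ * γ⁻¹) 2 j = (1 : Matrix (Fin 3) (Fin 3) ℤ) 2 j := by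
      intro j
      have : (δ * γ⁻¹) 2 j = (γ * γ⁻¹) 2 j := by
        rw [Matrix.mul_apply, Matrix.mul_apply, Fin.sum_univ_three, Fin.sum_univ_three,
          d20, d21, d22, e20, e21, e22]
      rw [this, hγγ]
    have hu00 : (δ * γ⁻¹) 0 0 = 1 := by rw [u0 0]; rfl
    have hu10 : (δ * γ⁻¹) 1 0 = 0 := by rw [u0 1]; rfl
    have hu20 : (δ * γ⁻¹) 2 0 = 0 := by rw [u0 2]; rfl
    have hu21 : (δ * γ⁻¹) 2 1 = 0 := by rw [u2 1]; rfl
    have hu22 : (δ * γ⁻¹) 2 2 = 1 := by rw [u2 2]; rfl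
    have hdetu : (δ * γ⁻¹).det = 1 := by
      rw [Matrix.det_mul, hdδ, Matrix.det_nonsing_inv, hdet]
      simp
    rw [Matrix.det_fin_three, hu00, hu10, hu20, hu21, hu22] at hdetu
    refine ⟨hu00, by linear_combination hdetu, hu22, hu10, hu20, hu21⟩
  · rw [Matrix.mul_assoc, Matrix.nonsing_inv_mul γ hunit, Matrix.mul_one]
end
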